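/- arXiv:1302.2751 — 13 statements merged into one kernel-verified Lean document; each statement's English description precedes it below -/
import Mathlib

section
/- Let 𝔤 be a finite-dimensional real Lie algebra equipped with an inner product. If 𝔤 possesses a basis {X₁,…,Xₙ} that is orthonormal and consists of geodesic vectors, then 𝔤 is unimodular, i.e. tr(ad(X)) = 0 for every X ∈ 𝔤. -/
/-- An inner product on a real vector space, given as a positive-definite
symmetric bilinear form. -/
structure IsInnerProduct {L : Type*} [AddCommGroup L] [Module ℝ L]
    (B : L →ₗ[ℝ] L →ₗ[ℝ] ℝ) : Prop where
  symm : ∀ x y : L, B x y = B y x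
  posdef : ∀ x : L, x ≠ 0 → 0 < B x x

/-- `Y` is a geodesic vector: `Y ≠ 0` and `⟨[X,Y],Y⟩ = 0` for all `X`. -/
def IsGeodesicVector {L : Type*} [LieRing L] [LieAlgebra ℝ L]
    (B : L →ₗ[ℝ] L →ₗ[ℝ] ℝ) (Y : L) : Prop :=
  Y ≠ 0 ∧ ∀ X : L, B ⁅X, Y⁆ Y = 0

/-- A family of vectors is orthonormal with respect to the bilinear form `B`. -/
def IsOrthonormalFamily {L : Type*} [AddCommGroup L] [Module ℝ L]
    (B : L →ₗ[ℝ] L →ₗ[ℝ] ℝ) {ι : Type*} [DecidableEq ι] (v : ι → L) : Prop :=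
  ∀ i j, B (v i) (v j) = if i = j then 1 else 0

/-- A real Lie algebra is unimodular if every adjoint map is trace-free. -/
def IsUnimodularLie (L : Type*) [LieRing L] [LieAlgebra ℝ L] : Prop :=
  ∀ X : L, LinearMap.trace ℝ L (LieAlgebra.ad ℝ L X) = 0

/-- If a finite-dimensional real Lie algebra with an inner product
possesses an orthonormal basis of geodesic vectors, then it is unimodular. -/
theorem unimodular_of_orthonormal_geodesic_basis
    {L : Type*} [LieRing L] [LieAlgebra ℝ L] [Module.Finite ℝ L]
    (B : L →ₗ[ℝ] L →ₗ[ℝ] ℝ) (hB : IsInnerProduct B)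
    {n : ℕ} (b : Module.Basis (Fin n) ℝ L)
    (horth : IsOrthonormalFamily B b)
    (hgeo : ∀ i, IsGeodesicVector B (b i)) :
    IsUnimodularLie L := by
  have hrepr : ∀ (y : L) (i : Fin n), b.repr y i = B y (b i) := by
    intro y i
    conv_rhs => rw [← b.sum_repr y]
    simp only [map_sum, map_smul, LinearMap.sum_apply, LinearMap.smul_apply, horth _ i,
      smul_eq_mul, mul_ite, mul_one, mul_zero, Finset.sum_ite_eq', Finset.mem_univ, if_true]
  intro X
  rw [LinearMap.trace_eq_matrix_trace ℝ b, Matrix.trace]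
  apply Finset.sum_eq_zero
  intro i _
  rw [Matrix.diag_apply, LinearMap.toMatrix_apply, hrepr]
  simpa using (hgeo i).2 X
end

section
/- Let 𝔤 be a finite-dimensional nilpotent real Lie algebra equipped with an inner product ⟨·,·⟩. Then there is an orthonormal basis of (𝔤,⟨·,·⟩) comprised of geodesic vectors. -/
universe u

/-- The inner product space core structure attached to a positive-definite symmetric
bilinear form. -/
noncomputable def coreOfB {L : Type u} [AddCommGroup L] [Module ℝ L]
    (B : L →ₗ[ℝ] L →ₗ[ℝ] ℝ) (hB : IsInnerProduct B) : InnerProductSpace.Core ℝ L where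
  inner x y := B x y
  conj_inner_symm x y := by simpa using hB.symm y x
  re_inner_nonneg x := by
    by_cases h : x = 0
    · simp [h]
    · exact le_of_lt (hB.posdef x h)
  add_left x y z := by simp
  smul_left x y r := by simp
  definite x h := by
    by_contra hx
    exact (hB.posdef x hx).ne' h

theorem aux_geodesic : ∀ (n : ℕ) {L : Type u} [LieRing L] [LieAlgebra ℝ L]
    [Module.Finite ℝ L] [LieRing.IsNilpotent L]
    (B : L →ₗ[ℝ] L →ₗ[ℝ] ℝ), IsInnerProduct B → Module.finrank ℝ L = n →
    ∃ b : Module.Basis (Fin (Module.finrank ℝ L)) ℝ L,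
      IsOrthonormalFamily B b ∧ ∀ i, IsGeodesicVector B (b i) := by
  intro n
  induction n using Nat.strong_induction_on with
  | _ n ih =>
  intro L _ _ _ _ B hB hn
  rcases subsingleton_or_nontrivial L with hL | hL
  · haveI : IsEmpty (Fin (Module.finrank ℝ L)) := by
      rw [Module.finrank_zero_of_subsingleton]
      exact Fin.isEmpty'
    exact ⟨Module.Basis.empty L, fun i => isEmptyElim i, fun i => isEmptyElim i⟩
  · -- set up the inner product space structure
    letI c : InnerProductSpace.Core ℝ L := coreOfB B hB
    letI : NormedAddCommGroup L := c.toNormedAddCommGroup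
    letI : InnerProductSpace ℝ L := InnerProductSpace.ofCore c.toCore
    haveI : FiniteDimensional ℝ L := ‹Module.Finite ℝ L›
    have hinner : ∀ x y : L, (inner ℝ x y : ℝ) = B x y := fun _ _ => rfl
    set Z : LieIdeal ℝ L := LieAlgebra.center ℝ L with hZ
    haveI : Nontrivial Z := LieAlgebra.non_trivial_center_of_isNilpotent (R := ℝ) (L := L)
    set z : Submodule ℝ L := Z.toSubmodule with hz
    have hcompl : IsCompl z zᗮ := Submodule.isCompl_orthogonal_of_hasOrthogonalProjection
    -- quotient Lie algebra
    haveI : Module.Finite ℝ (L ⧸ Z) := Module.Finite.quotient ℝ z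
    let π : L →ₗ⁅ℝ⁆ L ⧸ Z :=
      { z.mkQ with map_lie' := fun {x y} => (LieSubmodule.Quotient.mk_bracket Z x y) }
    have hπsurj : Function.Surjective π := Submodule.Quotient.mk_surjective z
    haveI : LieRing.IsNilpotent (L ⧸ Z) :=
      Function.Surjective.lieAlgebra_isNilpotent hπsurj
    -- section of the quotient map with range zᗮ
    let E : (L ⧸ Z) ≃ₗ[ℝ] zᗮ := Submodule.quotientEquivOfIsCompl z zᗮ hcompl
    let σ : (L ⧸ Z) →ₗ[ℝ] L := zᗮ.subtype ∘ₗ E.toLinearMap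
    have hσmem : ∀ x : L ⧸ Z, σ x ∈ zᗮ := fun x => (E x).2
    have hσ1 : ∀ x : L ⧸ Z, Submodule.Quotient.mk (σ x) = x := fun x =>
      Submodule.mk_quotientEquivOfIsCompl_apply hcompl x
    have hσ0 : ∀ x : L ⧸ Z, σ x = 0 → x = 0 := by
      intro x hx
      have := hσ1 x
      rw [hx] at this
      simpa using this.symm
    -- induced inner product on the quotient
    let B' : (L ⧸ Z) →ₗ[ℝ] (L ⧸ Z) →ₗ[ℝ] ℝ := B.compl₁₂ σ σ
    have hB' : IsInnerProduct B' :=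
      ⟨fun x y => hB.symm _ _, fun x hx => hB.posdef _ (fun h0 => hx (hσ0 x h0))⟩
    -- dimension count
    have hsum : Module.finrank ℝ (L ⧸ Z) + Module.finrank ℝ z = Module.finrank ℝ L :=
      Submodule.finrank_quotient_add_finrank z
    have hzpos : 0 < Module.finrank ℝ z := Module.finrank_pos
    have hlt : Module.finrank ℝ (L ⧸ Z) < n := by omega
    obtain ⟨c', hc'on, hc'geo⟩ := ih _ hlt B' hB' rfl
    -- orthonormal basis of the center
    let zb := stdOrthonormalBasis ℝ z
    let w : Fin (Module.finrank ℝ z) ⊕ Fin (Module.finrank ℝ (L ⧸ Z)) → L := Sum.elim (fun i => (zb i : L)) (fun j => σ (c' j))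
    have hw : ∀ i j, B (w i) (w j) = if i = j then 1 else 0 := by
      rintro (i | i) (j | j)
      · rw [← hinner]
        have := (orthonormal_iff_ite (𝕜 := ℝ)).1 zb.orthonormal i j
        rw [Submodule.coe_inner] at this
        simp only [w, Sum.elim_inl]
        rw [this]
        simp [Sum.inl.injEq]
      · have : (inner ℝ ((zb i : L)) (σ (c' j)) : ℝ) = 0 :=
          (Submodule.mem_orthogonal z (σ (c' j))).1 (hσmem _) _ (zb i).2
        simp only [w, Sum.elim_inl, Sum.elim_inr, ← hinner]
        rw [this]; simp
      · have h0 : (inner ℝ ((zb j : L)) (σ (c' i)) : ℝ) = 0 :=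
          (Submodule.mem_orthogonal z (σ (c' i))).1 (hσmem _) _ (zb j).2
        simp only [w, Sum.elim_inl, Sum.elim_inr]
        rw [hB.symm, ← hinner, h0]; simp
      · have := hc'on i j
        simp only [w, Sum.elim_inr]
        rw [show B (σ (c' i)) (σ (c' j)) = B' (c' i) (c' j) from rfl, this]
        simp [Sum.inr.injEq]
    have hon : Orthonormal ℝ w := (orthonormal_iff_ite (𝕜 := ℝ)).2 (fun i j => hw i j)
    have hcard : Fintype.card (Fin (Module.finrank ℝ z) ⊕ Fin (Module.finrank ℝ (L ⧸ Z)))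
        = Module.finrank ℝ L := by
      simp only [Fintype.card_sum, Fintype.card_fin]
      omega
    haveI : Nonempty (Fin (Module.finrank ℝ z)) := ⟨⟨0, hzpos⟩⟩
    haveI : Nonempty (Fin (Module.finrank ℝ z) ⊕ Fin (Module.finrank ℝ (L ⧸ Z))) :=
      ⟨Sum.inl (Classical.arbitrary _)⟩
    let b0 := basisOfLinearIndependentOfCardEqFinrank hon.linearIndependent hcard
    have hb0 : ⇑b0 = w := coe_basisOfLinearIndependentOfCardEqFinrank _ _
    have hdm : Module.finrank ℝ z + Module.finrank ℝ (L ⧸ Z) = Module.finrank ℝ L := by omega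
    let e : (Fin (Module.finrank ℝ z) ⊕ Fin (Module.finrank ℝ (L ⧸ Z))) ≃ Fin (Module.finrank ℝ L) :=
      finSumFinEquiv.trans (finCongr hdm)
    refine ⟨b0.reindex e, ?_, ?_⟩
    · intro i j
      rw [Module.Basis.reindex_apply, Module.Basis.reindex_apply, hb0, hw]
      simp [e.symm.injective.eq_iff]
    · intro i
      rw [Module.Basis.reindex_apply, hb0]
      -- reduce to the claim for w
      have key : ∀ k, IsGeodesicVector B (w k) := by
        rintro (i | j)
        · refine ⟨?_, ?_⟩
          · have hne : zb i ≠ 0 := by simpa using zb.toBasis.ne_zero i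
            simp only [w, Sum.elim_inl]
            exact fun h => hne (by exact_mod_cast Subtype.coe_injective (by simpa using h))
          · intro X
            have hcent : (zb i : L) ∈ LieAlgebra.center ℝ L := (zb i).2
            have : ⁅X, (zb i : L)⁆ = 0 :=
              (LieModule.mem_maxTrivSubmodule ℝ L L _).1 hcent X
            simp [w, this]
        · refine ⟨fun h0 => Module.Basis.ne_zero c' j (hσ0 _ h0), ?_⟩
          intro X
          set Y := σ (c' j) with hY
          set q := Submodule.Quotient.mk (p := z) ⁅X, Y⁆ with hq
          have hsplit : (⁅X, Y⁆ : L) = σ q + (⁅X, Y⁆ - σ q) := by abel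
          have h4 : B (⁅X, Y⁆ - σ q) Y = 0 := by
            rw [← hinner]
            refine (Submodule.mem_orthogonal z Y).1 (hσmem _) _ ?_
            rw [← Submodule.Quotient.mk_eq_zero, Submodule.Quotient.mk_sub, hq, hσ1, sub_self]
          have hmkY : LieSubmodule.Quotient.mk (N := Z) Y = c' j := hσ1 _
          have h1 : q = ⁅LieSubmodule.Quotient.mk (N := Z) X, c' j⁆ := by
            calc q = ⁅LieSubmodule.Quotient.mk (N := Z) X,
                      LieSubmodule.Quotient.mk (N := Z) Y⁆ :=
                    LieSubmodule.Quotient.mk_bracket Z X Y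
              _ = ⁅LieSubmodule.Quotient.mk (N := Z) X, c' j⁆ := by rw [hmkY]
          simp only [w, Sum.elim_inr, ← hY]
          conv_lhs => rw [hsplit]
          rw [map_add, LinearMap.add_apply, h4, add_zero, h1]
          exact (hc'geo j).2 _
      exact key _

/-- Every finite-dimensional nilpotent real Lie algebra with an inner
product has an orthonormal basis comprised of geodesic vectors. -/
theorem nilpotent_has_orthonormal_geodesic_basis
    {L : Type*} [LieRing L] [LieAlgebra ℝ L] [Module.Finite ℝ L]
    [LieRing.IsNilpotent L]
    (B : L →ₗ[ℝ] L →ₗ[ℝ] ℝ) (hB : IsInnerProduct B) :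
    ∃ b : Module.Basis (Fin (Module.finrank ℝ L)) ℝ L,
      IsOrthonormalFamily B b ∧ ∀ i, IsGeodesicVector B (b i) := by
  exact aux_geodesic (Module.finrank ℝ L) B hB rfl
end

section
/- Suppose A is a real n×n matrix with zero trace. Then there is a real orthogonal n×n matrix Q such that every diagonal entry of QAQ⁻¹ is zero. -/
open Matrix

-- Step 1: zero of the quadratic form on the unit sphere
lemma quad_zero (m : ℕ) (hm : 0 < m) (A : Matrix (Fin m) (Fin m) ℝ) (hA : A.trace = 0) :
    ∃ x : EuclideanSpace ℝ (Fin m), ‖x‖ = 1 ∧ ∑ j, ∑ k, x j * A j k * x k = 0 := by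
  set g : EuclideanSpace ℝ (Fin m) → ℝ := fun x => ∑ j, ∑ k, x j * A j k * x k with hg
  have hcont : Continuous g := by fun_prop
  have hge : ∀ i : Fin m, g (EuclideanSpace.single i 1) = A i i := by
    intro i
    simp [hg, EuclideanSpace.single_apply, Finset.mul_sum, mul_ite, ite_mul,
      Finset.sum_ite_eq', Finset.sum_ite_eq]
  have hsum : ∑ i, A i i = 0 := hA
  have hmem : ∀ i : Fin m, (EuclideanSpace.single i (1:ℝ)) ∈ Metric.sphere (0 : EuclideanSpace ℝ (Fin m)) 1 := by
    intro i
    simp [EuclideanSpace.norm_single]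
  -- exists i with A i i ≤ 0, j with 0 ≤ A j j
  have hne : (Finset.univ : Finset (Fin m)).Nonempty := by
    simpa [Finset.univ_nonempty_iff] using Fin.pos_iff_nonempty.mp hm
  obtain ⟨i, -, hi⟩ : ∃ i ∈ Finset.univ, A i i ≤ (0:ℝ) := by
    apply Finset.exists_le_of_sum_le hne
    simp [hsum]
  obtain ⟨j, -, hj⟩ : ∃ j ∈ Finset.univ, (0:ℝ) ≤ A j j := by
    apply Finset.exists_le_of_sum_le hne
    simp [hsum]
  rcases eq_or_lt_of_le hi with h0 | hi'
  · exact ⟨EuclideanSpace.single i 1, by simpa using hmem i, by rw [show (∑ j, ∑ k, (EuclideanSpace.single i (1:ℝ)) j * A j k * (EuclideanSpace.single i (1:ℝ)) k) = g (EuclideanSpace.single i 1) from rfl, hge i, ← h0]⟩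
  -- now need connectedness: m ≥ 2 since A i i < 0 and A j j ≥ 0 forces i ≠ j hence m ≥ 2
  have hij : i ≠ j := by rintro rfl; linarith
  have hrank : 1 < Module.rank ℝ (EuclideanSpace ℝ (Fin m)) := by
    have h2 : 2 ≤ m := by
      by_contra h
      push_neg at h
      interval_cases m
      exact hij (Subsingleton.elim i j)
    rw [← Module.finrank_eq_rank, finrank_euclideanSpace_fin]
    exact_mod_cast h2
  have hconn : IsPreconnected (Metric.sphere (0 : EuclideanSpace ℝ (Fin m)) 1) :=
    (isConnected_sphere hrank 0 zero_le_one).isPreconnected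
  have h0mem : (0:ℝ) ∈ g '' Metric.sphere (0 : EuclideanSpace ℝ (Fin m)) 1 := by
    apply hconn.intermediate_value (hmem i) (hmem j) hcont.continuousOn
    rw [hge, hge]
    exact ⟨hi, hj⟩
  obtain ⟨x, hx, hx0⟩ := h0mem
  exact ⟨x, by simpa using hx, hx0⟩

lemma ortho_of_onb {m : ℕ} (b : OrthonormalBasis (Fin m) ℝ (EuclideanSpace ℝ (Fin m))) :
    (Matrix.of fun i j => b i j) * (Matrix.of fun i j => b i j)ᵀ = 1 := by
  ext i j
  have hb := orthonormal_iff_ite.mp b.orthonormal i j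
  rw [PiLp.inner_apply] at hb
  simp only [Matrix.mul_apply, Matrix.transpose_apply, Matrix.of_apply]
  simp only [RCLike.inner_apply, starRingEnd_apply, star_trivial] at hb
  rw [show (∑ k, (b i).ofLp k * (b j).ofLp k) = ∑ k, (b j).ofLp k * (b i).ofLp k from Finset.sum_congr rfl fun k _ => mul_comm _ _, hb]
  by_cases h : i = j <;> simp [h, Matrix.one_apply]

lemma first_entry {m : ℕ} (A : Matrix (Fin (m+1)) (Fin (m+1)) ℝ) (hA : A.trace = 0) :
    ∃ Q : Matrix (Fin (m+1)) (Fin (m+1)) ℝ, Q * Qᵀ = 1 ∧ (Q * A * Qᵀ) 0 0 = 0 := by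
  obtain ⟨x, hx1, hx0⟩ := quad_zero (m+1) (Nat.succ_pos m) A hA
  -- orthonormal basis with b 0 = x
  have hcard : Module.finrank ℝ (EuclideanSpace ℝ (Fin (m+1))) = Fintype.card (Fin (m+1)) := by
    simp [finrank_euclideanSpace_fin]
  have horth : Orthonormal ℝ (({0} : Set (Fin (m+1))).restrict (fun _ => x)) := by
    rw [orthonormal_iff_ite]
    rintro ⟨i, hi⟩ ⟨j, hj⟩
    simp only [Set.mem_singleton_iff] at hi hj
    subst hi; subst hj
    simp only [Set.restrict_apply]
    rw [if_pos trivial]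
    have h := real_inner_self_eq_norm_sq x
    rw [hx1] at h
    change inner ℝ x x = (1:ℝ); rw [h]; norm_num
  obtain ⟨b, hb⟩ := horth.exists_orthonormalBasis_extension_of_card_eq hcard
  have hb0 : b 0 = x := hb 0 rfl
  refine ⟨Matrix.of fun i j => b i j, ortho_of_onb b, ?_⟩
  simp only [Matrix.mul_apply, Matrix.transpose_apply, Matrix.of_apply, hb0]
  rw [← hx0, Finset.sum_comm]
  congr 1
  ext k
  rw [Finset.sum_mul]

lemma main_aux : ∀ (m : ℕ) (A : Matrix (Fin m) (Fin m) ℝ), A.trace = 0 →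
    ∃ Q : Matrix (Fin m) (Fin m) ℝ, Q * Qᵀ = 1 ∧ ∀ i, (Q * A * Qᵀ) i i = 0 := by
  intro m
  induction m with
  | zero => exact fun A _ => ⟨1, by simp, fun i => i.elim0⟩
  | succ n ih =>
    intro A hA
    obtain ⟨Q₁, hQ₁, hB0⟩ := first_entry A hA
    set B := Q₁ * A * Q₁ᵀ with hBdef
    have hQ₁' : Q₁ᵀ * Q₁ = 1 := mul_eq_one_comm.mp hQ₁
    have hBtr : B.trace = 0 := by
      rw [hBdef, Matrix.trace_mul_cycle, hQ₁', Matrix.one_mul, hA]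
    set C : Matrix (Fin n) (Fin n) ℝ := Matrix.of (fun i j => B i.succ j.succ) with hCdef
    have hCtr : C.trace = 0 := by
      have h : ∑ i, B i i = 0 := hBtr
      rw [Fin.sum_univ_succ, hB0, zero_add] at h
      show ∑ i, C i i = 0
      simpa [hCdef] using h
    obtain ⟨R, hR, hRC⟩ := ih C hCtr
    set Q₂ : Matrix (Fin (n+1)) (Fin (n+1)) ℝ :=
      Matrix.of (Fin.cons (Fin.cons 1 0) (fun i => Fin.cons 0 (R i))) with hQ₂def
    have hQ₂0 : ∀ j : Fin n, Q₂ 0 j.succ = 0 := by intro j; simp [hQ₂def]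
    have hQ₂00 : Q₂ 0 0 = 1 := by simp [hQ₂def]
    have hQ₂s0 : ∀ i : Fin n, Q₂ i.succ 0 = 0 := by intro i; simp [hQ₂def]
    have hQ₂ss : ∀ i j : Fin n, Q₂ i.succ j.succ = R i j := by intro i j; simp [hQ₂def]
    have hQ₂orth : Q₂ * Q₂ᵀ = 1 := by
      ext i j
      rw [Matrix.mul_apply, Fin.sum_univ_succ]
      refine Fin.cases ?_ (fun i' => ?_) i <;> refine Fin.cases ?_ (fun j' => ?_) j
      · simp [Matrix.transpose_apply, hQ₂00, hQ₂0, Matrix.one_apply]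
      · simp [Matrix.transpose_apply, hQ₂00, hQ₂0, hQ₂s0, Matrix.one_apply,
          (Fin.succ_ne_zero j').symm]
      · simp [Matrix.transpose_apply, hQ₂00, hQ₂0, hQ₂s0, Matrix.one_apply,
          Fin.succ_ne_zero i']
      · have hRij := congrFun (congrFun hR i') j'
        rw [Matrix.mul_apply] at hRij
        simp only [Matrix.transpose_apply, Matrix.one_apply] at hRij
        simp only [Matrix.transpose_apply, hQ₂s0, hQ₂ss, zero_mul, zero_add, mul_zero]
        rw [hRij]
        by_cases h : i' = j' <;> simp [h, Matrix.one_apply, Fin.succ_inj]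
    refine ⟨Q₂ * Q₁, ?_, ?_⟩
    · rw [Matrix.transpose_mul, Matrix.mul_assoc, ← Matrix.mul_assoc Q₁, hQ₁,
        Matrix.one_mul, hQ₂orth]
    · have hconj : Q₂ * Q₁ * A * (Q₂ * Q₁)ᵀ = Q₂ * B * Q₂ᵀ := by
        rw [Matrix.transpose_mul, hBdef]
        noncomm_ring
      rw [hconj]
      intro i
      refine Fin.cases ?_ ?_ i
      · -- entry (0,0)
        rw [Matrix.mul_apply, Fin.sum_univ_succ]
        simp only [Matrix.transpose_apply, hQ₂00, hQ₂0, mul_one, mul_zero,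
          Finset.sum_const_zero, add_zero]
        rw [Matrix.mul_apply, Fin.sum_univ_succ]
        simp only [hQ₂00, hQ₂0, one_mul, zero_mul, Finset.sum_const_zero, add_zero]
        exact hB0
      · intro i'
        have hBC : ∀ k : Fin n, (Q₂ * B) i'.succ k.succ = (R * C) i' k := by
          intro k
          rw [Matrix.mul_apply, Fin.sum_univ_succ, Matrix.mul_apply]
          simp only [hQ₂s0, hQ₂ss, zero_mul, zero_add]
          exact Finset.sum_congr rfl fun j _ => by simp [hCdef]
        rw [Matrix.mul_apply, Fin.sum_univ_succ]
        simp only [Matrix.transpose_apply, hQ₂s0, mul_zero, zero_add]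
        calc ∑ k : Fin n, (Q₂ * B) i'.succ k.succ * Q₂ i'.succ k.succ
            = ∑ k : Fin n, (R * C) i' k * R i' k := by
              exact Finset.sum_congr rfl fun k _ => by rw [hBC, hQ₂ss]
          _ = (R * C * Rᵀ) i' i' := by rw [Matrix.mul_apply]; simp [Matrix.transpose_apply]
          _ = 0 := hRC i'

/-- A real square matrix with zero trace is orthogonally conjugate to a
matrix with zero diagonal. -/
theorem exists_orthogonal_conjugate_zero_diagonal
    {n : ℕ} (A : Matrix (Fin n) (Fin n) ℝ) (hA : A.trace = 0) :
    ∃ Q : Matrix (Fin n) (Fin n) ℝ, Q * Qᵀ = 1 ∧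
      ∀ i : Fin n, (Q * A * Q⁻¹) i i = 0 := by
  obtain ⟨Q, hQ, hdiag⟩ := main_aux n A hA
  refine ⟨Q, hQ, fun i => ?_⟩
  rw [Matrix.inv_eq_right_inv hQ]
  exact hdiag i
end

section
/- Let 𝔤 be a 3-dimensional unimodular real Lie algebra equipped with an inner product ⟨·,·⟩. Then there exist an orthonormal basis {Y₁,Y₂,Y₃} of 𝔤 and real numbers λ₁,λ₂,λ₃ such that [Y₂,Y₃] = λ₁Y₁, [Y₃,Y₁] = λ₂Y₂ and [Y₁,Y₂] = λ₃Y₃; in particular Y₁, Y₂, Y₃ are geodesic vectors. -/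
open scoped RealInnerProductSpace


/-- Milnor's normal form for 3-dimensional unimodular real Lie algebras
with an inner product: there is an orthonormal basis `Y₁, Y₂, Y₃` with
`[Y₂,Y₃] = λ₁Y₁`, `[Y₃,Y₁] = λ₂Y₂`, `[Y₁,Y₂] = λ₃Y₃`; its members are geodesic. -/
theorem dim_three_unimodular_milnor_basis
    {L : Type*} [LieRing L] [LieAlgebra ℝ L] [Module.Finite ℝ L]
    (hdim : Module.finrank ℝ L = 3) (hU : IsUnimodularLie L)
    (B : L →ₗ[ℝ] L →ₗ[ℝ] ℝ) (hB : IsInnerProduct B) :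
    ∃ (b : Module.Basis (Fin 3) ℝ L) (l₁ l₂ l₃ : ℝ),
      IsOrthonormalFamily B b ∧
      ⁅b 1, b 2⁆ = l₁ • b 0 ∧
      ⁅b 2, b 0⁆ = l₂ • b 1 ∧
      ⁅b 0, b 1⁆ = l₃ • b 2 ∧
      ∀ i, IsGeodesicVector B (b i) := by
  classical
  have hU : ∀ X : L, LinearMap.trace ℝ L (LieAlgebra.ad ℝ L X) = 0 := hU
  letI c : InnerProductSpace.Core ℝ L :=
  { inner := fun x y => B x y
    conj_inner_symm := fun x y => by simpa using hB.symm y x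
    re_inner_nonneg := fun x => by
      rcases eq_or_ne x 0 with h | h
      · simp [h]
      · simpa using (hB.posdef x h).le
    add_left := fun x y z => by simp
    smul_left := fun x y r => by simp
    definite := fun x hx => by
      by_contra h
      exact (hB.posdef x h).ne' (by simpa using hx) }
  letI : NormedAddCommGroup L := c.toNormedAddCommGroup
  letI : InnerProductSpace ℝ L := InnerProductSpace.ofCore c.toCore
  haveI : FiniteDimensional ℝ L := inferInstance
  have hBi : ∀ x y : L, B x y = ⟪x, y⟫ := fun _ _ => rfl
  set e : OrthonormalBasis (Fin 3) ℝ L :=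
    (stdOrthonormalBasis ℝ L).reindex (finCongr hdim) with he
  have hx : ∀ x : L, x = ⟪e 0, x⟫ • e 0 + ⟪e 1, x⟫ • e 1 + ⟪e 2, x⟫ • e 2 := by
    intro x
    have := e.sum_repr' x
    rw [Fin.sum_univ_three] at this
    exact this.symm
  set M : L →ₗ[ℝ] L := e.toBasis.constr ℝ ![⁅e 1, e 2⁆, ⁅e 2, e 0⁆, ⁅e 0, e 1⁆] with hMdef
  have hM0 : M (e 0) = ⁅e 1, e 2⁆ := by
    have h := e.toBasis.constr_basis ℝ ![⁅e 1, e 2⁆, ⁅e 2, e 0⁆, ⁅e 0, e 1⁆] (0 : Fin 3)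
    simp only [OrthonormalBasis.coe_toBasis, Matrix.cons_val_zero, Matrix.cons_val_one,
      Matrix.head_cons, Matrix.cons_val_two, Matrix.tail_cons] at h
    exact h
  have hM1 : M (e 1) = ⁅e 2, e 0⁆ := by
    have h := e.toBasis.constr_basis ℝ ![⁅e 1, e 2⁆, ⁅e 2, e 0⁆, ⁅e 0, e 1⁆] (1 : Fin 3)
    simp only [OrthonormalBasis.coe_toBasis, Matrix.cons_val_zero, Matrix.cons_val_one,
      Matrix.head_cons, Matrix.cons_val_two, Matrix.tail_cons] at h
    exact h
  have hM2 : M (e 2) = ⁅e 0, e 1⁆ := by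
    have h := e.toBasis.constr_basis ℝ ![⁅e 1, e 2⁆, ⁅e 2, e 0⁆, ⁅e 0, e 1⁆] (2 : Fin 3)
    simp only [OrthonormalBasis.coe_toBasis, Matrix.cons_val_zero, Matrix.cons_val_one,
      Matrix.head_cons, Matrix.cons_val_two, Matrix.tail_cons] at h
    exact h
  have h10 : ⁅e 1, e 0⁆ = -⁅e 0, e 1⁆ := (lie_skew _ _).symm
  have h20 : ⁅e 0, e 2⁆ = -⁅e 2, e 0⁆ := (lie_skew _ _).symm
  have h21 : ⁅e 2, e 1⁆ = -⁅e 1, e 2⁆ := (lie_skew _ _).symm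
  set cr : (Fin 3 → ℝ) → (Fin 3 → ℝ) → L := fun a b =>
    (a 1 * b 2 - a 2 * b 1) • e 0 + (a 2 * b 0 - a 0 * b 2) • e 1 +
      (a 0 * b 1 - a 1 * b 0) • e 2 with hcr
  set r : L → Fin 3 → ℝ := fun x i => ⟪e i, x⟫ with hr
  have hbr : ∀ x y : L, ⁅x, y⁆ = M (cr (r x) (r y)) := by
    intro x y
    conv_lhs => rw [hx x, hx y]
    simp only [hcr, hr, map_add, map_smul, hM0, hM1, hM2, add_lie, lie_add, smul_lie, lie_smul,
      lie_self, h10, h20, h21]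
    module
  have hic : ∀ (x : L) (a b : Fin 3 → ℝ), ⟪x, cr a b⟫ =
      r x 0 * (a 1 * b 2 - a 2 * b 1) + r x 1 * (a 2 * b 0 - a 0 * b 2) +
        r x 2 * (a 0 * b 1 - a 1 * b 0) := by
    intro x a b
    simp only [hcr, hr, inner_add_right, real_inner_smul_right]
    rw [real_inner_comm (e 0) x, real_inner_comm (e 1) x, real_inner_comm (e 2) x]
    ring
  have htr : ∀ X : L, ⟪e 0, ⁅X, e 0⁆⟫ + ⟪e 1, ⁅X, e 1⁆⟫ + ⟪e 2, ⁅X, e 2⁆⟫ = 0 := by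
    intro X
    have h := hU X
    rw [LinearMap.trace_eq_matrix_trace ℝ e.toBasis, Matrix.trace] at h
    simp only [Fin.sum_univ_three, Matrix.diag_apply, LinearMap.toMatrix_apply,
      OrthonormalBasis.coe_toBasis, OrthonormalBasis.coe_toBasis_repr_apply,
      OrthonormalBasis.repr_apply_apply, LieAlgebra.ad_apply] at h
    exact h
  have t0 := htr (e 0)
  have t1 := htr (e 1)
  have t2 := htr (e 2)
  simp only [lie_self, inner_zero_right, h10, h20, h21, inner_neg_right] at t0 t1 t2
  have s01 : ⟪M (e 0), e 1⟫ = ⟪e 0, M (e 1)⟫ := by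
    rw [hM0, hM1]
    linarith [t2, real_inner_comm (e 1) (⁅e 1, e 2⁆ : L)]
  have s12 : ⟪M (e 1), e 2⟫ = ⟪e 1, M (e 2)⟫ := by
    rw [hM1, hM2]
    linarith [t0, real_inner_comm (e 2) (⁅e 2, e 0⁆ : L)]
  have s02 : ⟪M (e 0), e 2⟫ = ⟪e 0, M (e 2)⟫ := by
    rw [hM0, hM2]
    linarith [t1, real_inner_comm (⁅e 1, e 2⁆ : L) (e 2)]
  have hflip : ∀ u v : L, ⟪M u, v⟫ = ⟪u, M v⟫ → ⟪M v, u⟫ = ⟪v, M u⟫ := fun u v h =>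
    ((real_inner_comm (M v) u).symm.trans h.symm).trans (real_inner_comm v (M u))
  have hMb : ∀ i j : Fin 3, ⟪M (e i), e j⟫ = ⟪e i, M (e j)⟫ := by
    intro i j
    fin_cases i <;> fin_cases j <;>
      first
        | exact real_inner_comm _ _
        | exact s01 | exact s12 | exact s02
        | exact hflip _ _ s01 | exact hflip _ _ s12 | exact hflip _ _ s02
  have hMsym : M.IsSymmetric := by
    intro x y
    rw [hx x, hx y]
    simp only [map_add, map_smul, inner_add_left, inner_add_right, real_inner_smul_left,
      real_inner_smul_right, hMb]
  set f := hMsym.eigenvectorBasis hdim with hf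
  set mu := hMsym.eigenvalues hdim with hmu
  have hMf : ∀ i, M (f i) = mu i • f i := by
    intro i
    simpa [hf, hmu] using hMsym.apply_eigenvectorBasis hdim i
  have hxf : ∀ x : L, x = ⟪f 0, x⟫ • f 0 + ⟪f 1, x⟫ • f 1 + ⟪f 2, x⟫ • f 2 := by
    intro x
    have := f.sum_repr' x
    rw [Fin.sum_univ_three] at this
    exact this.symm
  set d : ℝ := ⟪f 0, cr (r (f 1)) (r (f 2))⟫ with hd
  have hcyc : ∀ x y z : L, ⟪x, cr (r y) (r z)⟫ = ⟪z, cr (r x) (r y)⟫ := by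
    intro x y z
    rw [hic, hic]
    simp only [hr]
    ring
  have hrep1 : ∀ x y : L, ⟪x, cr (r x) (r y)⟫ = 0 := by
    intro x y; rw [hic]; simp only [hr]; ring
  have hrep2 : ∀ x y : L, ⟪y, cr (r x) (r y)⟫ = 0 := by
    intro x y; rw [hic]; simp only [hr]; ring
  have hc12 : cr (r (f 1)) (r (f 2)) = d • f 0 := by
    rw [hxf (cr (r (f 1)) (r (f 2))), hrep1, hrep2, ← hd]
    simp
  have hc20 : cr (r (f 2)) (r (f 0)) = d • f 1 := by
    rw [hxf (cr (r (f 2)) (r (f 0))), hrep1, hrep2, hcyc (f 1) (f 2) (f 0), ← hd]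
    simp
  have hc01 : cr (r (f 0)) (r (f 1)) = d • f 2 := by
    rw [hxf (cr (r (f 0)) (r (f 1))), hrep1, hrep2, hcyc (f 2) (f 0) (f 1),
      hcyc (f 1) (f 2) (f 0), ← hd]
    simp
  have hb12 : ⁅f 1, f 2⁆ = (d * mu 0) • f 0 := by
    rw [hbr, hc12, map_smul, hMf, smul_smul]
  have hb20 : ⁅f 2, f 0⁆ = (d * mu 1) • f 1 := by
    rw [hbr, hc20, map_smul, hMf, smul_smul]
  have hb01 : ⁅f 0, f 1⁆ = (d * mu 2) • f 2 := by
    rw [hbr, hc01, map_smul, hMf, smul_smul]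
  have hgeo : ∀ (i : Fin 3) (X : L), ⟪⁅X, f i⁆, f i⟫ = 0 := by
    intro i X
    rw [hbr, real_inner_comm, ← hMsym, hMf, real_inner_smul_left, hrep2, mul_zero]
  have horth : ∀ i j : Fin 3, ⟪f i, f j⟫ = if i = j then 1 else 0 :=
    orthonormal_iff_ite.mp f.orthonormal
  refine ⟨f.toBasis, d * mu 0, d * mu 1, d * mu 2, ?_, ?_, ?_, ?_, ?_⟩
  · intro i j
    simp only [OrthonormalBasis.coe_toBasis]
    rw [hBi]
    exact horth i j
  · simp only [OrthonormalBasis.coe_toBasis]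
    exact hb12
  · simp only [OrthonormalBasis.coe_toBasis]
    exact hb20
  · simp only [OrthonormalBasis.coe_toBasis]
    exact hb01
  · intro i
    refine ⟨?_, fun X => ?_⟩
    · simp only [OrthonormalBasis.coe_toBasis]
      exact f.toBasis.ne_zero i
    · simp only [OrthonormalBasis.coe_toBasis]
      rw [hBi]
      exact hgeo i X
end

section
/- Let 𝔤 be a finite-dimensional unimodular real Lie algebra whose derived algebra 𝔤' = [𝔤,𝔤] is one-dimensional. Then 𝔤' is contained in the centre of 𝔤; consequently 𝔤 is nilpotent. -/
/-- In a finite-dimensional unimodular real Lie algebra whose derived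
algebra is one-dimensional, the derived algebra is central, and the algebra is nilpotent. -/
theorem derived_dim_one_central_and_nilpotent
    {L : Type*} [LieRing L] [LieAlgebra ℝ L] [Module.Finite ℝ L]
    (hU : IsUnimodularLie L)
    (hdim : Module.finrank ℝ (LieAlgebra.derivedSeries ℝ L 1) = 1) :
    LieAlgebra.derivedSeries ℝ L 1 ≤ LieAlgebra.center ℝ L ∧
      LieRing.IsNilpotent L := by
  set D := LieAlgebra.derivedSeries ℝ L 1 with hD
  -- ad X maps everything into D
  have hmem : ∀ X v : L, ⁅X, v⁆ ∈ D := by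
    intro X v
    have : D = ⁅(⊤ : LieIdeal ℝ L), (⊤ : LieIdeal ℝ L)⁆ := by
      rw [hD, LieAlgebra.derivedSeries_def, LieAlgebra.derivedSeriesOfIdeal_succ,
        LieAlgebra.derivedSeriesOfIdeal_zero]
    rw [this]
    exact LieSubmodule.lie_mem_lie (LieSubmodule.mem_top _) (LieSubmodule.mem_top _)
  have hcentral : ∀ z ∈ D, ∀ X : L, ⁅X, z⁆ = 0 := by
    intro z hz X
    -- restrict ad X to D
    have hf : ∀ v, LieAlgebra.ad ℝ L X v ∈ D.toSubmodule := fun v => hmem X v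
    have hf' : ∀ v ∈ D.toSubmodule, LieAlgebra.ad ℝ L X v ∈ D.toSubmodule :=
      fun v _ => hf v
    set g := (LieAlgebra.ad ℝ L X).restrict hf' with hg
    have htr : LinearMap.trace ℝ D.toSubmodule g = 0 := by
      rw [LinearMap.trace_restrict_eq_of_forall_mem _ _ hf, hU X]
    -- basis of D (1-dimensional)
    have b := Module.finBasisOfFinrankEq ℝ D.toSubmodule hdim
    have htr2 : LinearMap.trace ℝ D.toSubmodule g = (b.repr (g (b 0))) 0 := by
      rw [LinearMap.trace_eq_matrix_trace ℝ b g, Matrix.trace]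
      simp [Matrix.diag, LinearMap.toMatrix_apply]
    have hgz : g ⟨z, hz⟩ = 0 := by
      have hb0 : g (b 0) = 0 := by
        have := b.sum_repr (g (b 0))
        rw [htr2] at htr
        simp only [Fin.sum_univ_one] at this
        rw [← this, htr, zero_smul]
      obtain ⟨c, hc⟩ : ∃ c : ℝ, (⟨z, hz⟩ : D.toSubmodule) = c • b 0 := by
        refine ⟨b.repr ⟨z, hz⟩ 0, ?_⟩
        have := b.sum_repr (⟨z, hz⟩ : D.toSubmodule)
        simpa [Fin.sum_univ_one] using this.symm
      rw [hc, map_smul, hb0, smul_zero]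
    have : (g ⟨z, hz⟩ : L) = ⁅X, z⁆ := rfl
    rw [hgz] at this
    exact this.symm ▸ rfl
  constructor
  · intro z hz
    rw [LieAlgebra.center, LieModule.mem_maxTrivSubmodule]
    intro X
    exact hcentral z hz X
  · refine LieModule.IsNilpotent.mk (R := ℝ) (L := L) (M := L) (k := 2) ?_
    have h1 : LieModule.lowerCentralSeries ℝ L L 1 = D := by
      rw [hD, LieAlgebra.derivedSeries_def, LieAlgebra.derivedSeriesOfIdeal_succ,
        LieAlgebra.derivedSeriesOfIdeal_zero, LieModule.lowerCentralSeries_succ,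
        LieModule.lowerCentralSeries_zero]
    rw [LieModule.lowerCentralSeries_succ, h1, LieSubmodule.lie_eq_bot_iff]
    intro x _ m hm
    exact hcentral m hm x
end

section
/- Let 𝔤 be a 4-dimensional solvable unimodular real Lie algebra whose derived algebra 𝔤' = [𝔤,𝔤] is 2-dimensional. Then 𝔤 possesses an abelian ideal of codimension one. -/
section Aux

open Module LinearMap

lemma matrix_comm_traceless {A B : Matrix (Fin 2) (Fin 2) ℝ}
    (hA : A.trace = 0) (hB : B.trace = 0) (hc : A * B = B * A) (hA0 : A ≠ 0) :
    ∃ t : ℝ, B = t • A := by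
  rw [Matrix.trace_fin_two] at hA hB
  have hA11 : A 1 1 = -A 0 0 := by linarith
  have hB11 : B 1 1 = -B 0 0 := by linarith
  have e00 := congrFun (congrFun hc 0) 0
  have e01 := congrFun (congrFun hc 0) 1
  have e10 := congrFun (congrFun hc 1) 0
  simp [Matrix.mul_apply, Fin.sum_univ_two, hA11, hB11] at e00 e01 e10
  have key : ∃ t : ℝ, B 0 0 = t * A 0 0 ∧ B 0 1 = t * A 0 1 ∧ B 1 0 = t * A 1 0 := by
    by_cases ha : A 0 0 ≠ 0
    · refine ⟨B 0 0 / A 0 0, ?_, ?_, ?_⟩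
      · rw [div_mul_eq_mul_div, eq_div_iff ha]
      · rw [div_mul_eq_mul_div, eq_div_iff ha]; linear_combination e01 / 2
      · rw [div_mul_eq_mul_div, eq_div_iff ha]; linear_combination -e10 / 2
    · push_neg at ha
      by_cases hb : A 0 1 ≠ 0
      · refine ⟨B 0 1 / A 0 1, ?_, ?_, ?_⟩
        · rw [div_mul_eq_mul_div, eq_div_iff hb]; linear_combination -e01 / 2
        · rw [div_mul_eq_mul_div, eq_div_iff hb]
        · rw [div_mul_eq_mul_div, eq_div_iff hb]; linear_combination e00
      · push_neg at hb
        have hcne : A 1 0 ≠ 0 := by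
          intro hcc
          apply hA0
          ext i j
          fin_cases i <;> fin_cases j
          · exact ha
          · exact hb
          · exact hcc
          · show A 1 1 = (0 : ℝ); rw [hA11, ha, neg_zero]
        refine ⟨B 1 0 / A 1 0, ?_, ?_, ?_⟩
        · rw [div_mul_eq_mul_div, eq_div_iff hcne]; linear_combination e10 / 2
        · rw [div_mul_eq_mul_div, eq_div_iff hcne]; linear_combination -e00
        · rw [div_mul_eq_mul_div, eq_div_iff hcne]
  obtain ⟨t, h00, h01, h10⟩ := key
  have h11 : B 1 1 = t * A 1 1 := by rw [hA11, hB11, h00]; ring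
  refine ⟨t, ?_⟩
  ext i j
  fin_cases i <;> fin_cases j
  · exact h00
  · exact h01
  · exact h10
  · exact h11

lemma end_comm_traceless {V : Type*} [AddCommGroup V] [Module ℝ V] [Module.Finite ℝ V]
    (h2 : Module.finrank ℝ V = 2) {A B : Module.End ℝ V}
    (hA : LinearMap.trace ℝ V A = 0) (hB : LinearMap.trace ℝ V B = 0)
    (hc : A * B = B * A) (hA0 : A ≠ 0) : ∃ t : ℝ, B = t • A := by
  let b : Basis (Fin 2) ℝ V := Module.finBasisOfFinrankEq ℝ V h2
  have hmul : ∀ f g : Module.End ℝ V,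
      LinearMap.toMatrix b b (f * g) = LinearMap.toMatrix b b f * LinearMap.toMatrix b b g :=
    fun f g => LinearMap.toMatrix_mul b f g
  obtain ⟨t, ht⟩ := matrix_comm_traceless (A := LinearMap.toMatrix b b A)
      (B := LinearMap.toMatrix b b B)
      (by rw [← LinearMap.trace_eq_matrix_trace ℝ b]; exact hA)
      (by rw [← LinearMap.trace_eq_matrix_trace ℝ b]; exact hB)
      (by rw [← hmul, ← hmul, hc])
      (by
        intro h
        apply hA0
        apply (LinearMap.toMatrix b b).injective
        rw [h, map_zero])
  refine ⟨t, (LinearMap.toMatrix b b).injective ?_⟩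
  rw [ht, map_smul]

lemma trace_eq_of_rank_one {V : Type*} [AddCommGroup V] [Module ℝ V] [Module.Finite ℝ V]
    (T : Module.End ℝ V) (w : V) (hw : w ≠ 0) (lam : ℝ)
    (hrange : ∀ m : V, T m ∈ Submodule.span ℝ {w}) (hTw : T w = lam • w) :
    LinearMap.trace ℝ V T = lam := by
  have h' : ∀ x ∈ Submodule.span ℝ ({w} : Set V), T x ∈ Submodule.span ℝ ({w} : Set V) :=
    fun x _ => hrange x
  rw [← LinearMap.trace_restrict_eq_of_forall_mem _ T hrange h']
  have hres : T.restrict h' = lam • LinearMap.id := by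
    ext ⟨m, hm⟩
    obtain ⟨c, rfl⟩ := Submodule.mem_span_singleton.mp hm
    show T (c • w) = lam • (c • w)
    rw [map_smul, hTw, smul_comm]
  rw [hres, map_smul, LinearMap.trace_id, finrank_span_singleton hw]
  simp

end Aux

attribute [local instance 100] LieRing.ofAssociativeRing

/-- A 4-dimensional solvable unimodular real Lie algebra whose derived
algebra is 2-dimensional possesses an abelian ideal of codimension one. -/
theorem dim_four_derived_two_has_codim_one_abelian_ideal
    {L : Type*} [LieRing L] [LieAlgebra ℝ L] [Module.Finite ℝ L]
    (hdim : Module.finrank ℝ L = 4)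
    [LieAlgebra.IsSolvable L] (hU : IsUnimodularLie L)
    (hdim' : Module.finrank ℝ (LieAlgebra.derivedSeries ℝ L 1) = 2) :
    ∃ H : LieIdeal ℝ L, IsLieAbelian H ∧
      Module.finrank ℝ H + 1 = Module.finrank ℝ L := by
  classical
  set I : LieIdeal ℝ L := LieAlgebra.derivedSeries ℝ L 1 with hIdef
  have hmemI : ∀ x m : L, ⁅x, m⁆ ∈ I := by
    intro x m
    have h1 : I = ⁅(⊤ : LieIdeal ℝ L), (⊤ : LieIdeal ℝ L)⁆ := by
      rw [hIdef, LieAlgebra.derivedSeries_def, LieAlgebra.derivedSeriesOfIdeal_succ,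
        LieAlgebra.derivedSeriesOfIdeal_zero]
    rw [h1]
    exact LieSubmodule.lie_mem_lie (LieSubmodule.mem_top x) (LieSubmodule.mem_top m)
  set φ := LieModule.toEnd ℝ L I with hφdef
  -- trace transfer
  have htr : ∀ X : L, LinearMap.trace ℝ I (φ X) = 0 := by
    intro X
    have hf : ∀ m : L, (LieAlgebra.ad ℝ L X) m ∈ I.toSubmodule := fun m => hmemI X m
    have heq : φ X = (LieAlgebra.ad ℝ L X).restrict (fun m _ => hf m) := by
      ext m; rfl
    rw [heq]
    exact (LinearMap.trace_restrict_eq_of_forall_mem I.toSubmodule _ hf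
      (fun m _ => hf m)).trans (hU X)
  -- Step A : derived ideal is abelian
  have habI : ∀ y z : L, y ∈ I → z ∈ I → ⁅y, z⁆ = 0 := by
    by_contra hcon
    push_neg at hcon
    obtain ⟨y, z, hy, hz, hyz⟩ := hcon
    set u : I := ⟨y, hy⟩ with hu
    set v : I := ⟨z, hz⟩ with hv
    set w : I := ⟨⁅y, z⁆, hmemI y z⟩ with hwdef
    have hw0 : w ≠ 0 := fun h => hyz (congrArg Subtype.val h)
    have hindep : LinearIndependent ℝ ![u, v] := by
      rw [LinearIndependent.pair_iff]
      intro s t hst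
      have hst' : s • y + t • z = 0 := congrArg Subtype.val hst
      have hs : s = 0 := by
        by_contra hs
        apply hyz
        have h1 : s • y = -(t • z) := by
          rw [eq_neg_iff_add_eq_zero]; exact hst'
        have h2 : y = s⁻¹ • -(t • z) := by
          rw [← h1, inv_smul_smul₀ hs]
        rw [h2]
        simp [smul_lie, lie_self]
      have ht : t = 0 := by
        by_contra ht
        apply hyz
        have h1 : z = 0 := by
          have : t • z = 0 := by rw [hs] at hst'; simpa using hst'
          exact (smul_eq_zero.mp this).resolve_left ht
        rw [h1, lie_zero]
      exact ⟨hs, ht⟩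
    have hcard : Fintype.card (Fin 2) = Module.finrank ℝ I := by
      rw [Fintype.card_fin]; exact hdim'.symm
    have hspan := hindep.span_eq_top_of_card_eq_finrank hcard
    have hro : Set.range ![u, v] = {u, v} := by
      ext x; simp [Fin.exists_fin_two, or_comm]
    have hcoord : ∀ m : I, ∃ a b : ℝ, a • u + b • v = m := by
      intro m
      have hm : m ∈ Submodule.span ℝ ({u, v} : Set I) := by
        rw [← hro, hspan]; trivial
      exact Submodule.mem_span_pair.mp hm
    obtain ⟨γ, δ, hγδ⟩ := hcoord w
    have hγδ' : γ • y + δ • z = ⁅y, z⁆ := congrArg Subtype.val hγδ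
    by_cases hδ : δ ≠ 0
    · -- use T = φ y
      have hrange : ∀ m : I, φ y m ∈ Submodule.span ℝ ({w} : Set I) := by
        intro m
        obtain ⟨a, b, hab⟩ := hcoord m
        have hab' : a • y + b • z = (m : L) := congrArg Subtype.val hab
        have : φ y m = b • w := by
          refine Subtype.ext ?_
          show ⁅y, (m : L)⁆ = b • ⁅y, z⁆
          rw [← hab', lie_add, lie_smul, lie_smul, lie_self]
          module
        rw [this]
        exact Submodule.smul_mem _ b (Submodule.mem_span_singleton_self w)
      have hTw : φ y w = δ • w := by
        refine Subtype.ext ?_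
        show ⁅y, ⁅y, z⁆⁆ = δ • ⁅y, z⁆
        conv_lhs => rw [← hγδ']
        rw [lie_add, lie_smul, lie_smul, lie_self]
        module
      have := trace_eq_of_rank_one (φ y) w hw0 δ hrange hTw
      rw [htr y] at this
      exact hδ this.symm
    · push_neg at hδ
      have hγ : γ ≠ 0 := by
        intro hγ
        apply hw0
        have : (w : L) = 0 := by
          show ⁅y, z⁆ = 0
          rw [← hγδ', hγ, hδ]; simp
        exact Subtype.ext this
      have hzy : ⁅z, y⁆ = -⁅y, z⁆ := (lie_skew z y).symm
      have hrange : ∀ m : I, φ z m ∈ Submodule.span ℝ ({w} : Set I) := by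
        intro m
        obtain ⟨a, b, hab⟩ := hcoord m
        have hab' : a • y + b • z = (m : L) := congrArg Subtype.val hab
        have : φ z m = (-a) • w := by
          refine Subtype.ext ?_
          show ⁅z, (m : L)⁆ = (-a) • ⁅y, z⁆
          rw [← hab', lie_add, lie_smul, lie_smul, lie_self, hzy]
          module
        rw [this]
        exact Submodule.smul_mem _ _ (Submodule.mem_span_singleton_self w)
      have hTw : φ z w = (-γ) • w := by
        refine Subtype.ext ?_
        show ⁅z, ⁅y, z⁆⁆ = (-γ) • ⁅y, z⁆
        conv_lhs => rw [← hγδ']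
        rw [lie_add, lie_smul, lie_smul, lie_self, hzy]
        module
      have := trace_eq_of_rank_one (φ z) w hw0 (-γ) hrange hTw
      rw [htr z] at this
      exact hγ (neg_eq_zero.mp this.symm)
  -- Step B : find X ∉ I with ⁅X, I⁆ = 0
  have hφI : ∀ z, z ∈ I → φ z = 0 := by
    intro z hz
    ext m
    show ⁅z, (m : L)⁆ = (0 : L)
    exact habI z m hz m.2
  have hcomm : ∀ X Y : L, φ X * φ Y = φ Y * φ X := by
    intro X Y
    have h1 : φ ⁅X, Y⁆ = ⁅φ X, φ Y⁆ := φ.map_lie X Y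
    have h2 : φ ⁅X, Y⁆ = 0 := hφI _ (hmemI X Y)
    have h3 : φ X * φ Y - φ Y * φ X = 0 := by
      rw [← Ring.lie_def, ← h1, h2]
    exact sub_eq_zero.mp h3
  set φ' : L →ₗ[ℝ] Module.End ℝ I := φ.toLinearMap with hφ'def
  have hrank : Module.finrank ℝ (LinearMap.range φ') ≤ 1 := by
    by_cases h0 : ∀ X : L, φ X = 0
    · have hbot : LinearMap.range φ' = ⊥ := LinearMap.range_eq_bot.mpr (LinearMap.ext fun X => h0 X)
      rw [hbot, finrank_bot]
      norm_num
    · push_neg at h0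
      obtain ⟨X₀, hX₀⟩ := h0
      have hle : LinearMap.range φ' ≤ Submodule.span ℝ {φ X₀} := by
        rintro f ⟨Y, rfl⟩
        obtain ⟨t, ht⟩ := end_comm_traceless hdim' (htr X₀) (htr Y) (hcomm X₀ Y) hX₀
        have : φ' Y = t • φ X₀ := ht
        rw [this]
        exact Submodule.smul_mem _ t (Submodule.mem_span_singleton_self _)
      calc Module.finrank ℝ (LinearMap.range φ') ≤
          Module.finrank ℝ (Submodule.span ℝ {φ X₀}) := Submodule.finrank_mono hle
        _ = 1 := finrank_span_singleton hX₀
  have hkernel : 3 ≤ Module.finrank ℝ (LinearMap.ker φ') := by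
    have h := LinearMap.finrank_range_add_finrank_ker φ'
    rw [hdim] at h
    omega
  obtain ⟨X, hXker, hXI⟩ : ∃ X, X ∈ LinearMap.ker φ' ∧ X ∉ I := by
    by_contra hcon
    push_neg at hcon
    have hle : LinearMap.ker φ' ≤ I.toSubmodule := fun z hz => hcon z hz
    have h2 := Submodule.finrank_mono hle
    have h3 : Module.finrank ℝ I.toSubmodule = 2 := hdim'
    omega
  have hX0 : X ≠ 0 := fun h => hXI (h ▸ I.zero_mem)
  have hXbr : ∀ z, z ∈ I → ⁅X, z⁆ = 0 := by
    intro z hz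
    have h1 : φ' X = 0 := LinearMap.mem_ker.mp hXker
    have h2 : ((φ' X) ⟨z, hz⟩ : I) = 0 := by rw [h1]; rfl
    exact congrArg Subtype.val h2
  -- Build the ideal
  set S : Submodule ℝ L := I.toSubmodule ⊔ (ℝ ∙ X) with hSdef
  have hSmem : ∀ m : L, m ∈ S → ∃ (i : L) (c : ℝ), i ∈ I ∧ m = i + c • X := by
    intro m hm
    obtain ⟨i, hi, x, hx, rfl⟩ := Submodule.mem_sup.mp hm
    obtain ⟨c, rfl⟩ := Submodule.mem_span_singleton.mp hx
    exact ⟨i, c, hi, rfl⟩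
  let H : LieIdeal ℝ L :=
    { toSubmodule := S
      lie_mem := fun {x m} _ => Submodule.mem_sup_left (hmemI x m) }
  refine ⟨H, ?_, ?_⟩
  · constructor
    intro a b
    obtain ⟨i1, c1, hi1, he1⟩ := hSmem (a : L) a.2
    obtain ⟨i2, c2, hi2, he2⟩ := hSmem (b : L) b.2
    refine Subtype.ext ?_
    show ⁅(a : L), (b : L)⁆ = 0
    rw [he1, he2]
    rw [lie_add, add_lie, add_lie, lie_smul, lie_smul, smul_lie, smul_lie]
    rw [habI i1 i2 hi1 hi2, hXbr i2 hi2, lie_self, ← lie_skew i1 X, hXbr i1 hi1]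
    simp
  · have hXspan : Module.finrank ℝ (ℝ ∙ X) = 1 := finrank_span_singleton hX0
    have hinf : I.toSubmodule ⊓ (ℝ ∙ X) = ⊥ := by
      rw [eq_bot_iff]
      rintro m ⟨hmI, hms⟩
      obtain ⟨c, rfl⟩ := Submodule.mem_span_singleton.mp hms
      rcases eq_or_ne c 0 with hc | hc
      · rw [hc, zero_smul]; exact Submodule.zero_mem ⊥
      · exfalso
        apply hXI
        have : X = c⁻¹ • (c • X) := by rw [inv_smul_smul₀ hc]
        rw [this]
        exact I.toSubmodule.smul_mem c⁻¹ hmI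
    have hsum := Submodule.finrank_sup_add_finrank_inf_eq I.toSubmodule (ℝ ∙ X)
    rw [hinf, finrank_bot, hXspan] at hsum
    have h3 : Module.finrank ℝ I.toSubmodule = 2 := hdim'
    have hS3 : Module.finrank ℝ S = 3 := by rw [hSdef]; omega
    show Module.finrank ℝ S + 1 = Module.finrank ℝ L
    rw [hS3, hdim]
end

section
/- Let 𝔤 be a finite-dimensional real Lie algebra with inner product, and let 𝔥 be an ideal of codimension one with 𝔥 = [𝔤,𝔤] and 𝔤 = 𝔥 + Z(𝔤), where Z(𝔤) is the centre of 𝔤. If {Y₁,…,Yₙ} is an orthonormal basis of 𝔥 (with the restricted inner product) consisting of vectors that are geodesic in 𝔥, and W is a unit vector orthogonal to 𝔥, then {Y₁,…,Yₙ,W} is an orthonormal basis of 𝔤 consisting of geodesic vectors of 𝔤. -/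
lemma ortho_indep {L : Type*} [AddCommGroup L] [Module ℝ L]
    (B : L →ₗ[ℝ] L →ₗ[ℝ] ℝ) {ι : Type*} [Fintype ι] [DecidableEq ι] {v : ι → L}
    (h : IsOrthonormalFamily B v) : LinearIndependent ℝ v := by
  rw [Fintype.linearIndependent_iff]
  intro g hg i
  have key : B (∑ j, g j • v j) (v i) = g i := by
    rw [map_sum, LinearMap.sum_apply]
    have : ∀ j, B (g j • v j) (v i) = if j = i then g j else 0 := by
      intro j
      rw [map_smul, LinearMap.smul_apply, smul_eq_mul, h j i]
      by_cases hji : j = i <;> simp [hji]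
    simp only [this, Finset.sum_ite_eq', Finset.mem_univ, if_true]
  rw [hg, map_zero, LinearMap.zero_apply] at key
  exact key.symm

/-- If `H` is a codimension-one ideal with `H = [𝔤,𝔤]` and
`𝔤 = H + Z(𝔤)`, then appending a unit vector `W ⊥ H` to an orthonormal basis of `H`
consisting of vectors geodesic in `H` yields an orthonormal basis of `𝔤` consisting
of geodesic vectors of `𝔤`. -/
theorem append_unit_normal_to_geodesic_basis_of_derived
    {L : Type*} [LieRing L] [LieAlgebra ℝ L] [Module.Finite ℝ L]
    (B : L →ₗ[ℝ] L →ₗ[ℝ] ℝ) (hB : IsInnerProduct B)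
    (H : LieIdeal ℝ L)
    (hcodim : Module.finrank ℝ H + 1 = Module.finrank ℝ L)
    (hderived : LieAlgebra.derivedSeries ℝ L 1 = H)
    (hsum : (H : Submodule ℝ L) ⊔ (LieAlgebra.center ℝ L : Submodule ℝ L) = ⊤)
    {n : ℕ} (Y : Fin n → L)
    (hmem : ∀ i, Y i ∈ H)
    (hindep : LinearIndependent ℝ Y)
    (hspan : Submodule.span ℝ (Set.range Y) = (H : Submodule ℝ L))
    (horth : IsOrthonormalFamily B Y)
    (hgeo : ∀ i, Y i ≠ 0 ∧ ∀ X ∈ H, B ⁅X, Y i⁆ (Y i) = 0)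
    (W : L) (hW : B W W = 1) (hWperp : ∀ v ∈ H, B W v = 0) :
    LinearIndependent ℝ (Fin.cons W Y : Fin (n + 1) → L) ∧
    Submodule.span ℝ (Set.range (Fin.cons W Y : Fin (n + 1) → L)) = ⊤ ∧
    IsOrthonormalFamily B (Fin.cons W Y : Fin (n + 1) → L) ∧
    ∀ i, IsGeodesicVector B ((Fin.cons W Y : Fin (n + 1) → L) i) := by
  -- orthonormality of the extended family
  have horth' : IsOrthonormalFamily B (Fin.cons W Y : Fin (n + 1) → L) := by
    intro i j
    refine Fin.cases ?_ ?_ i <;> [skip; intro k] <;> refine Fin.cases ?_ ?_ j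
    · simpa using hW
    · intro l
      simp only [Fin.cons_zero, Fin.cons_succ]
      rw [hWperp (Y l) (hmem l)]
      simp [(Fin.succ_ne_zero l).symm]
    · simp only [Fin.cons_zero, Fin.cons_succ]
      rw [hB.symm, hWperp (Y k) (hmem k)]
      simp [Fin.succ_ne_zero k]
    · intro l
      simp only [Fin.cons_succ]
      rw [horth k l]
      simp [Fin.succ_inj]
  have hli : LinearIndependent ℝ (Fin.cons W Y : Fin (n + 1) → L) := ortho_indep B horth'
  -- span
  have hn : n = Module.finrank ℝ (H : Submodule ℝ L) := by
    have := finrank_span_eq_card hindep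
    rw [hspan] at this
    simpa using this.symm
  have hspan' : Submodule.span ℝ (Set.range (Fin.cons W Y : Fin (n + 1) → L)) = ⊤ := by
    apply Submodule.eq_top_of_finrank_eq
    rw [finrank_span_eq_card hli, Fintype.card_fin, hn]
    exact hcodim
  refine ⟨hli, hspan', horth', ?_⟩
  -- geodesic vectors
  intro i
  refine Fin.cases ?_ ?_ i
  · refine ⟨fun h0 => ?_, ?_⟩
    · rw [show (Fin.cons W Y : Fin (n+1) → L) 0 = W from Fin.cons_zero _ _] at h0
      rw [h0] at hW; simp at hW
    intro X
    simp only [Fin.cons_zero]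
    have hmemH : ⁅X, W⁆ ∈ H := by
      rw [← hderived]
      exact LieSubmodule.lie_mem_lie (LieSubmodule.mem_top X) (LieSubmodule.mem_top W)
    rw [hB.symm]
    exact hWperp _ hmemH
  · intro k
    simp only [Fin.cons_succ]
    refine ⟨(hgeo k).1, ?_⟩
    intro X
    have hX : X ∈ (H : Submodule ℝ L) ⊔ (LieAlgebra.center ℝ L : Submodule ℝ L) := by
      rw [hsum]; trivial
    obtain ⟨h, hh, z, hz, rfl⟩ := Submodule.mem_sup.mp hX
    have hzc : ∀ x : L, ⁅x, z⁆ = 0 := by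
      intro x
      exact hz x
    have hz0 : ⁅z, Y k⁆ = 0 := by rw [← lie_skew, hzc, neg_zero]
    rw [add_lie, hz0, add_zero]
    exact (hgeo k).2 h hh
end

section
/- Let 𝔤 be a 5-dimensional real Lie algebra with basis {X₁,X₂,X₃,X₄,X₅} satisfying [X₁,X₂] = 3X₂, [X₁,X₃] = −4X₃, [X₁,X₄] = −X₄, [X₁,X₅] = 2X₅, [X₂,X₃] = X₄, [X₂,X₄] = X₅, and all other brackets of basis elements zero. Then 𝔤 is solvable and unimodular, but not nilpotent. -/
section Aux

variable {L : Type*} [LieRing L] [LieAlgebra ℝ L]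

lemma bracket_span_mem {s t : Set L} {p : Submodule ℝ L}
    (h : ∀ x ∈ s, ∀ y ∈ t, ⁅x, y⁆ ∈ p) {x y : L}
    (hx : x ∈ Submodule.span ℝ s) (hy : y ∈ Submodule.span ℝ t) : ⁅x, y⁆ ∈ p := by
  induction hx using Submodule.span_induction with
  | mem x hxs =>
    induction hy using Submodule.span_induction with
    | mem y hyt => exact h _ hxs _ hyt
    | zero => rw [lie_zero]; exact p.zero_mem
    | add y z _ _ hy hz => rw [lie_add]; exact p.add_mem hy hz
    | smul c y _ hy => rw [lie_smul]; exact p.smul_mem c hy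
  | zero => rw [zero_lie]; exact p.zero_mem
  | add x z _ _ h1 h2 => rw [add_lie]; exact p.add_mem h1 h2
  | smul c x _ h1 => rw [smul_lie]; exact p.smul_mem c h1

end Aux

set_option maxHeartbeats 2000000 in
/-- The 5-dimensional Lie algebra of the Example is solvable and
unimodular, but not nilpotent. -/
theorem example_algebra_solvable_unimodular_not_nilpotent
    {L : Type*} [LieRing L] [LieAlgebra ℝ L]
    (b : Module.Basis (Fin 5) ℝ L)
    (h12 : ⁅b 0, b 1⁆ = (3 : ℝ) • b 1)
    (h13 : ⁅b 0, b 2⁆ = (-4 : ℝ) • b 2)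
    (h14 : ⁅b 0, b 3⁆ = -b 3)
    (h15 : ⁅b 0, b 4⁆ = (2 : ℝ) • b 4)
    (h23 : ⁅b 1, b 2⁆ = b 3)
    (h24 : ⁅b 1, b 3⁆ = b 4)
    (h25 : ⁅b 1, b 4⁆ = 0)
    (h34 : ⁅b 2, b 3⁆ = 0)
    (h35 : ⁅b 2, b 4⁆ = 0)
    (h45 : ⁅b 3, b 4⁆ = 0)
    : LieAlgebra.IsSolvable L ∧ IsUnimodularLie L ∧ ¬ LieRing.IsNilpotent L := by
  -- the two key submodules
  set S1 : Submodule ℝ L := Submodule.span ℝ {b 1, b 2, b 3, b 4} with hS1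
  set S2 : Submodule ℝ L := Submodule.span ℝ {b 3, b 4} with hS2
  have m1 : b 1 ∈ S1 := Submodule.subset_span (by simp)
  have m2 : b 2 ∈ S1 := Submodule.subset_span (by simp)
  have m3 : b 3 ∈ S1 := Submodule.subset_span (by simp)
  have m4 : b 4 ∈ S1 := Submodule.subset_span (by simp)
  have n3 : b 3 ∈ S2 := Submodule.subset_span (by simp)
  have n4 : b 4 ∈ S2 := Submodule.subset_span (by simp)
  -- full bracket table lands in S1
  have tab1 : ∀ i j : Fin 5, ⁅b i, b j⁆ ∈ S1 := by
    intro i j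
    fin_cases i <;> fin_cases j <;>
      first
      | (simp only [Fin.reduceFinMk, Fin.isValue, h12, h13, h14, h15, h23, h24, h25, h34, h35, h45, lie_self];
         solve_by_elim [Submodule.zero_mem, Submodule.neg_mem, Submodule.smul_mem, m1, m2, m3, m4])
      | (rw [← lie_skew];
         simp only [Fin.reduceFinMk, Fin.isValue, h12, h13, h14, h15, h23, h24, h25, h34, h35, h45, lie_self,
           neg_zero];
         solve_by_elim [Submodule.zero_mem, Submodule.neg_mem, Submodule.smul_mem, m1, m2, m3, m4])
  -- brackets of S1-generators land in S2
  have tab2 : ∀ x ∈ ({b 1, b 2, b 3, b 4} : Set L), ∀ y ∈ ({b 1, b 2, b 3, b 4} : Set L),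
      ⁅x, y⁆ ∈ S2 := by
    intro x hx y hy
    simp only [Set.mem_insert_iff, Set.mem_singleton_iff] at hx hy
    rcases hx with rfl | rfl | rfl | rfl <;> rcases hy with rfl | rfl | rfl | rfl <;>
      first
      | (simp only [h23, h24, h25, h34, h35, h45, lie_self];
         solve_by_elim [Submodule.zero_mem, Submodule.neg_mem, Submodule.smul_mem, n3, n4])
      | (rw [← lie_skew];
         simp only [h23, h24, h25, h34, h35, h45, lie_self, neg_zero];
         solve_by_elim [Submodule.zero_mem, Submodule.neg_mem, Submodule.smul_mem, n3, n4])
  -- brackets of S2-generators vanish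
  have tab3 : ∀ x ∈ ({b 3, b 4} : Set L), ∀ y ∈ ({b 3, b 4} : Set L), ⁅x, y⁆ = 0 := by
    intro x hx y hy
    simp only [Set.mem_insert_iff, Set.mem_singleton_iff] at hx hy
    rcases hx with rfl | rfl <;> rcases hy with rfl | rfl <;>
      first
      | (simp only [h45, lie_self])
      | (rw [← lie_skew, h45, neg_zero])
  have htop : ∀ x : L, x ∈ Submodule.span ℝ (Set.range b) := fun x => b.mem_span x
  -- S1 and S2 are Lie ideals
  have range_tab1 : ∀ x ∈ Set.range b, ∀ y ∈ Set.range b, ⁅x, y⁆ ∈ S1 := by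
    rintro x ⟨i, rfl⟩ y ⟨j, rfl⟩; exact tab1 i j
  have S1_mem_span : ∀ y ∈ S1, y ∈ Submodule.span ℝ (Set.range b) := fun y _ => htop y
  have tabI1 : ∀ x ∈ Set.range b, ∀ y ∈ ({b 1, b 2, b 3, b 4} : Set L), ⁅x, y⁆ ∈ S1 := by
    rintro x ⟨i, rfl⟩ y hy
    simp only [Set.mem_insert_iff, Set.mem_singleton_iff] at hy
    rcases hy with rfl | rfl | rfl | rfl <;> exact tab1 i _
  let I1 : LieIdeal ℝ L :=
    { S1 with
      lie_mem := fun {x m} hm => bracket_span_mem tabI1 (htop x) hm }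
  have tabI2 : ∀ x ∈ Set.range b, ∀ y ∈ ({b 3, b 4} : Set L), ⁅x, y⁆ ∈ S2 := by
    rintro x ⟨i, rfl⟩ y hy
    simp only [Set.mem_insert_iff, Set.mem_singleton_iff] at hy
    fin_cases i <;> rcases hy with rfl | rfl <;>
      first
      | (simp only [Fin.reduceFinMk, Fin.isValue, h14, h15, h24, h25, h34, h35, h45,
           lie_self];
         solve_by_elim [Submodule.zero_mem, Submodule.neg_mem, Submodule.smul_mem, n3, n4])
      | (rw [← lie_skew];
         simp only [Fin.reduceFinMk, Fin.isValue, h14, h15, h24, h25, h34, h35, h45,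
           lie_self, neg_zero];
         solve_by_elim [Submodule.zero_mem, Submodule.neg_mem, Submodule.smul_mem, n3, n4])
  let I2 : LieIdeal ℝ L :=
    { S2 with
      lie_mem := fun {x m} hm => bracket_span_mem tabI2 (htop x) hm }
  have memI1 : ∀ x : L, x ∈ I1 ↔ x ∈ S1 := fun _ => Iff.rfl
  have memI2 : ∀ x : L, x ∈ I2 ↔ x ∈ S2 := fun _ => Iff.rfl
  -- derived series bounds
  have d1 : LieAlgebra.derivedSeries ℝ L 1 ≤ I1 := by
    rw [LieAlgebra.derivedSeries_def, LieAlgebra.derivedSeriesOfIdeal_succ,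
      LieAlgebra.derivedSeriesOfIdeal_zero]
    rw [LieSubmodule.lie_le_iff]
    intro x _ m _
    exact bracket_span_mem range_tab1 (htop x) (htop m)
  have d2 : LieAlgebra.derivedSeries ℝ L 2 ≤ I2 := by
    have : LieAlgebra.derivedSeries ℝ L 2 ≤ ⁅I1, I1⁆ := by
      rw [LieAlgebra.derivedSeries_def, LieAlgebra.derivedSeriesOfIdeal_succ]
      exact LieSubmodule.mono_lie d1 d1
    refine this.trans ?_
    rw [LieSubmodule.lie_le_iff]
    intro x hx m hm
    exact bracket_span_mem tab2 ((memI1 x).mp hx) ((memI1 m).mp hm)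
  have d3 : LieAlgebra.derivedSeries ℝ L 3 = ⊥ := by
    have h1 : LieAlgebra.derivedSeries ℝ L 3 ≤ ⁅I2, I2⁆ := by
      rw [LieAlgebra.derivedSeries_def, LieAlgebra.derivedSeriesOfIdeal_succ]
      exact LieSubmodule.mono_lie d2 d2
    have h2 : ⁅I2, I2⁆ = (⊥ : LieIdeal ℝ L) := by
      rw [LieSubmodule.lie_eq_bot_iff]
      intro x hx m hm
      have : ⁅(x : L), m⁆ ∈ (⊥ : Submodule ℝ L) :=
        bracket_span_mem (p := (⊥ : Submodule ℝ L))
          (fun a ha c hc => by rw [tab3 a ha c hc]; exact Submodule.zero_mem _)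
          ((memI2 x).mp hx) ((memI2 m).mp hm)
      simpa using this
    rw [← le_bot_iff]
    exact h2 ▸ h1
  refine ⟨LieAlgebra.IsSolvable.mk d3, ?_, ?_⟩
  · -- unimodular
    -- reversed brackets
    have h21 : ⁅b 1, b 0⁆ = -((3 : ℝ) • b 1) := by rw [← lie_skew, h12]
    have h31 : ⁅b 2, b 0⁆ = -((-4 : ℝ) • b 2) := by rw [← lie_skew, h13]
    have h41 : ⁅b 3, b 0⁆ = -(-b 3) := by rw [← lie_skew, h14]
    have h51 : ⁅b 4, b 0⁆ = -((2 : ℝ) • b 4) := by rw [← lie_skew, h15]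
    have h32 : ⁅b 2, b 1⁆ = -(b 3) := by rw [← lie_skew, h23]
    have h42 : ⁅b 3, b 1⁆ = -(b 4) := by rw [← lie_skew, h24]
    have h52 : ⁅b 4, b 1⁆ = 0 := by rw [← lie_skew, h25, neg_zero]
    have h43 : ⁅b 3, b 2⁆ = 0 := by rw [← lie_skew, h34, neg_zero]
    have h53 : ⁅b 4, b 2⁆ = 0 := by rw [← lie_skew, h35, neg_zero]
    have h54 : ⁅b 4, b 3⁆ = 0 := by rw [← lie_skew, h45, neg_zero]
    have tr : ∀ i : Fin 5, LinearMap.trace ℝ L (LieAlgebra.ad ℝ L (b i)) = 0 := by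
      intro i
      rw [LinearMap.trace_eq_matrix_trace ℝ b, Matrix.trace]
      simp only [Matrix.diag, LinearMap.toMatrix_apply, LieAlgebra.ad_apply]
      fin_cases i <;>
        simp [Fin.sum_univ_five, h12, h13, h14, h15, h23, h24, h25, h34, h35, h45,
          h21, h31, h41, h51, h32, h42, h52, h43, h53, h54, Finsupp.single_apply] <;>
        norm_num
    intro X
    letI : LieRing (Module.End ℝ L) := LieRing.ofAssociativeRing
    set T : L →ₗ[ℝ] ℝ :=
      (LinearMap.trace ℝ L) ∘ₗ (LieAlgebra.ad ℝ L).toLinearMap with hT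
    have hTX : ∀ Y : L, T Y = LinearMap.trace ℝ L (LieAlgebra.ad ℝ L Y) := fun Y => rfl
    rw [← hTX, ← b.sum_repr X, map_sum]
    simp only [map_smul, smul_eq_mul, hTX, tr, mul_zero, Finset.sum_const_zero]
  · -- not nilpotent
    intro h
    obtain ⟨k, hk⟩ := LieAlgebra.nilpotent_ad_of_nilpotent_algebra ℝ L
    have pow : ∀ n : ℕ, ((LieAlgebra.ad ℝ L (b 0)) ^ n) (b 1) = (3 : ℝ) ^ n • b 1 := by
      intro n
      induction n with
      | zero => simp
      | succ n ih =>
        rw [pow_succ', Module.End.mul_apply, ih, map_smul, LieAlgebra.ad_apply, h12,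
          smul_smul, pow_succ', mul_comm]
    have h0 := pow k
    rw [hk (b 0)] at h0
    have : b 1 = 0 := by
      have h3 : ((3 : ℝ) ^ k)⁻¹ • ((3 : ℝ) ^ k • b 1) = ((3 : ℝ) ^ k)⁻¹ • (0 : L) := by
        rw [← h0]; simp
      rwa [smul_smul, inv_mul_cancel₀ (by positivity), one_smul, smul_zero] at h3
    exact b.ne_zero 1 this
end

section
/- Let 𝔤 be a 5-dimensional real Lie algebra with basis {X₁,X₂,X₃,X₄,X₅} satisfying [X₁,X₂] = 3X₂, [X₁,X₃] = −4X₃, [X₁,X₄] = −X₄, [X₁,X₅] = 2X₅, [X₂,X₃] = X₄, [X₂,X₄] = X₅, and all other brackets of basis elements zero. Then for every inner product on 𝔤 there is no orthonormal basis of 𝔤 comprised of geodesic vectors. -/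
set_option maxHeartbeats 1600000 in
/-- The 5-dimensional Lie algebra of the Example has no orthonormal
basis of geodesic vectors, for any inner product. -/
theorem example_algebra_no_orthonormal_geodesic_basis
    {L : Type*} [LieRing L] [LieAlgebra ℝ L]
    (b : Module.Basis (Fin 5) ℝ L)
    (h12 : ⁅b 0, b 1⁆ = (3 : ℝ) • b 1)
    (h13 : ⁅b 0, b 2⁆ = (-4 : ℝ) • b 2)
    (h14 : ⁅b 0, b 3⁆ = -b 3)
    (h15 : ⁅b 0, b 4⁆ = (2 : ℝ) • b 4)
    (h23 : ⁅b 1, b 2⁆ = b 3)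
    (h24 : ⁅b 1, b 3⁆ = b 4)
    (h25 : ⁅b 1, b 4⁆ = 0)
    (h34 : ⁅b 2, b 3⁆ = 0)
    (h35 : ⁅b 2, b 4⁆ = 0)
    (h45 : ⁅b 3, b 4⁆ = 0)
    : ∀ B : L →ₗ[ℝ] L →ₗ[ℝ] ℝ, IsInnerProduct B →
      ¬ ∃ c : Module.Basis (Fin 5) ℝ L,
          IsOrthonormalFamily B c ∧ ∀ i, IsGeodesicVector B (c i) := by
  intro B _hB
  rintro ⟨c, horth0, hgeo⟩
  have horth : ∀ i j, B (c i) (c j) = if i = j then 1 else 0 := horth0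
  -- reversed bracket relations
  have h21 : ⁅b 1, b 0⁆ = (-3 : ℝ) • b 1 := by rw [← lie_skew, h12]; module
  have h31 : ⁅b 2, b 0⁆ = (4 : ℝ) • b 2 := by rw [← lie_skew, h13]; module
  have h41 : ⁅b 3, b 0⁆ = b 3 := by rw [← lie_skew, h14]; module
  have h51 : ⁅b 4, b 0⁆ = (-2 : ℝ) • b 4 := by rw [← lie_skew, h15]; module
  have h32 : ⁅b 2, b 1⁆ = -b 3 := by rw [← lie_skew, h23]
  have h42 : ⁅b 3, b 1⁆ = -b 4 := by rw [← lie_skew, h24]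
  have h52 : ⁅b 4, b 1⁆ = 0 := by rw [← lie_skew, h25, neg_zero]
  have h43 : ⁅b 3, b 2⁆ = 0 := by rw [← lie_skew, h34, neg_zero]
  have h53 : ⁅b 4, b 2⁆ = 0 := by rw [← lie_skew, h35, neg_zero]
  have h54 : ⁅b 4, b 3⁆ = 0 := by rw [← lie_skew, h45, neg_zero]
  -- expansion of c i in the basis b
  have hci : ∀ i : Fin 5, c i = b.repr (c i) 0 • b 0 + b.repr (c i) 1 • b 1
      + b.repr (c i) 2 • b 2 + b.repr (c i) 3 • b 3 + b.repr (c i) 4 • b 4 := by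
    intro i
    have h := b.sum_repr (c i)
    rw [Fin.sum_univ_five] at h
    exact h.symm
  -- the five geodesic scalar equations
  have E0 : ∀ i, 3 * b.repr (c i) 1 * B (b 1) (c i) - 4 * b.repr (c i) 2 * B (b 2) (c i)
      - b.repr (c i) 3 * B (b 3) (c i) + 2 * b.repr (c i) 4 * B (b 4) (c i) = 0 := by
    intro i
    have h := (hgeo i).2 (b 0)
    rw [show (⁅b 0, c i⁆ : L) = (3 * b.repr (c i) 1) • b 1 + (-4 * b.repr (c i) 2) • b 2
        + (-(b.repr (c i) 3)) • b 3 + (2 * b.repr (c i) 4) • b 4 by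
      conv_lhs => rw [hci i]
      simp only [lie_add, lie_smul, lie_self, h12, h13, h14, h15, smul_zero, smul_smul, smul_neg]
      module] at h
    simp only [map_add, map_smul, map_neg, LinearMap.add_apply, LinearMap.smul_apply,
      LinearMap.neg_apply, smul_eq_mul] at h
    linarith
  have E1 : ∀ i, -3 * b.repr (c i) 0 * B (b 1) (c i) + b.repr (c i) 2 * B (b 3) (c i)
      + b.repr (c i) 3 * B (b 4) (c i) = 0 := by
    intro i
    have h := (hgeo i).2 (b 1)
    rw [show (⁅b 1, c i⁆ : L) = (-3 * b.repr (c i) 0) • b 1 + (b.repr (c i) 2) • b 3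
        + (b.repr (c i) 3) • b 4 by
      conv_lhs => rw [hci i]
      simp only [lie_add, lie_smul, lie_self, h21, h23, h24, h25, smul_zero, smul_smul, smul_neg]
      module] at h
    simp only [map_add, map_smul, map_neg, LinearMap.add_apply, LinearMap.smul_apply,
      LinearMap.neg_apply, smul_eq_mul] at h
    linarith
  have E2 : ∀ i, 4 * b.repr (c i) 0 * B (b 2) (c i) - b.repr (c i) 1 * B (b 3) (c i) = 0 := by
    intro i
    have h := (hgeo i).2 (b 2)
    rw [show (⁅b 2, c i⁆ : L) = (4 * b.repr (c i) 0) • b 2 + (-(b.repr (c i) 1)) • b 3 by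
      conv_lhs => rw [hci i]
      simp only [lie_add, lie_smul, lie_self, h31, h32, h34, h35, smul_zero, smul_smul, smul_neg]
      module] at h
    simp only [map_add, map_smul, map_neg, LinearMap.add_apply, LinearMap.smul_apply,
      LinearMap.neg_apply, smul_eq_mul] at h
    linarith
  have E3 : ∀ i, b.repr (c i) 0 * B (b 3) (c i) - b.repr (c i) 1 * B (b 4) (c i) = 0 := by
    intro i
    have h := (hgeo i).2 (b 3)
    rw [show (⁅b 3, c i⁆ : L) = (b.repr (c i) 0) • b 3 + (-(b.repr (c i) 1)) • b 4 by
      conv_lhs => rw [hci i]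
      simp only [lie_add, lie_smul, lie_self, h41, h42, h43, h45, smul_zero, smul_smul, smul_neg]
      module] at h
    simp only [map_add, map_smul, map_neg, LinearMap.add_apply, LinearMap.smul_apply,
      LinearMap.neg_apply, smul_eq_mul] at h
    linarith
  have E4 : ∀ i, b.repr (c i) 0 * B (b 4) (c i) = 0 := by
    intro i
    have h := (hgeo i).2 (b 4)
    rw [show (⁅b 4, c i⁆ : L) = (-2 * b.repr (c i) 0) • b 4 by
      conv_lhs => rw [hci i]
      simp only [lie_add, lie_smul, lie_self, h51, h52, h53, h54, smul_zero, smul_smul, smul_neg]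
      module] at h
    simp only [map_add, map_smul, map_neg, LinearMap.add_apply, LinearMap.smul_apply,
      LinearMap.neg_apply, smul_eq_mul] at h
    linarith
  -- expansion of any vector in the orthonormal basis c
  have h_expand : ∀ z : L, z = ∑ i, B z (c i) • c i := by
    have h : (∑ i, ((B.flip (c i)).smulRight (c i))) = (LinearMap.id : L →ₗ[ℝ] L) := by
      apply c.ext
      intro j
      simp [LinearMap.sum_apply, LinearMap.smulRight_apply, LinearMap.flip_apply, horth,
        ite_smul, Finset.sum_ite_eq]
    intro z
    have h2 := congrArg (fun f : L →ₗ[ℝ] L => f z) h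
    simpa [LinearMap.sum_apply] using h2.symm
  have h_repr : ∀ (z : L) (j : Fin 5), b.repr z j = ∑ i, B z (c i) * b.repr (c i) j := by
    intro z j
    have h := congrArg (fun w : L => b.repr w j) (h_expand z)
    simpa [map_sum, Finsupp.coe_finset_sum, Finset.sum_apply, Pi.smul_apply, smul_eq_mul]
      using h
  -- B (c i) (c j) via the basis b
  have hBcc : ∀ i j : Fin 5, B (c i) (c j) =
      b.repr (c i) 0 * B (b 0) (c j) + b.repr (c i) 1 * B (b 1) (c j)
      + b.repr (c i) 2 * B (b 2) (c j) + b.repr (c i) 3 * B (b 3) (c j)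
      + b.repr (c i) 4 * B (b 4) (c j) := by
    intro i j
    conv_lhs => rw [hci i]
    simp only [map_add, map_smul, LinearMap.add_apply, LinearMap.smul_apply, smul_eq_mul]
  -- Step 1: there is k with (c k)₀ ≠ 0
  have hex : ∃ k, b.repr (c k) 0 ≠ 0 := by
    by_contra hcon
    push_neg at hcon
    have h1 := h_repr (b 0) 0
    simp [Module.Basis.repr_self, hcon] at h1
  obtain ⟨k, hk0⟩ := hex
  -- the G's of c k vanish
  have hk4 : B (b 4) (c k) = 0 := (mul_eq_zero.mp (E4 k)).resolve_left hk0
  have hk3 : B (b 3) (c k) = 0 := by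
    have h := E3 k
    rw [hk4, mul_zero, sub_zero] at h
    exact (mul_eq_zero.mp h).resolve_left hk0
  have hk2 : B (b 2) (c k) = 0 := by
    have h := E2 k
    rw [hk3, mul_zero, sub_zero] at h
    have h' : b.repr (c k) 0 * B (b 2) (c k) = 0 := by linarith
    exact (mul_eq_zero.mp h').resolve_left hk0
  have hk1 : B (b 1) (c k) = 0 := by
    have h := E1 k
    rw [hk3, hk4, mul_zero, mul_zero] at h
    have h' : b.repr (c k) 0 * B (b 1) (c k) = 0 := by linarith
    exact (mul_eq_zero.mp h').resolve_left hk0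
  -- B (b 0) (c k) ≠ 0
  have hkk : b.repr (c k) 0 * B (b 0) (c k) = 1 := by
    have h := hBcc k k
    rw [horth k k, hk1, hk2, hk3, hk4] at h
    simp at h
    linarith
  have hB0k : B (b 0) (c k) ≠ 0 := by
    intro h
    rw [h, mul_zero] at hkk
    exact zero_ne_one hkk
  -- Step 2: all other coordinates-0 vanish
  have hy0 : ∀ i, i ≠ k → b.repr (c i) 0 = 0 := by
    intro i hik
    have h := hBcc i k
    rw [horth i k, hk1, hk2, hk3, hk4, if_neg hik] at h
    simp at h
    rcases h with h' | h'
    · exact h'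
    · exact absurd h' hB0k
  -- zero G₃, G₄ for vectors with nonzero coordinate 1
  have hG34 : ∀ i, i ≠ k → b.repr (c i) 1 ≠ 0 →
      B (b 3) (c i) = 0 ∧ B (b 4) (c i) = 0 := by
    intro i hik hi1
    have hz := hy0 i hik
    have h2 := E2 i
    have h3 := E3 i
    rw [hz] at h2 h3
    simp at h2 h3
    constructor
    · rcases h2 with h' | h'
      · exact absurd h' hi1
      · exact h'
    · rcases h3 with h' | h'
      · exact absurd h' hi1
      · exact h'
  -- Step 3: there is s ≠ k with (c s)₁ ≠ 0
  have hexs : ∃ s, s ≠ k ∧ b.repr (c s) 1 ≠ 0 := by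
    by_contra hcon
    push_neg at hcon
    have h1 := h_repr (b 1) 1
    have hzero : ∀ i ∈ (Finset.univ : Finset (Fin 5)), B (b 1) (c i) * b.repr (c i) 1 = 0 := by
      intro i _
      by_cases hik : i = k
      · rw [hik, hk1, zero_mul]
      · rw [hcon i hik, mul_zero]
    rw [Finset.sum_eq_zero hzero] at h1
    simp [Module.Basis.repr_self] at h1
  obtain ⟨s, hsk, hs1⟩ := hexs
  obtain ⟨hs3, hs4⟩ := hG34 s hsk hs1
  -- case split
  by_cases hA : ∀ i, i ≠ k → i ≠ s → b.repr (c i) 1 = 0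
  · -- Case A : s is the only index (other than k) with nonzero coordinate 1
    have e1 : B (b 1) (c s) * b.repr (c s) 1 = 1 := by
      have h1 := h_repr (b 1) 1
      rw [Finset.sum_eq_single s (fun i _ his => by
        by_cases hik : i = k
        · subst hik; simp [hk1]
        · rw [hA i hik his, mul_zero]) (fun h => absurd (Finset.mem_univ s) h)] at h1
      rw [← h1]
      simp [Module.Basis.repr_self]
    have e2 : B (b 2) (c s) = 0 := by
      have h1 := h_repr (b 2) 1
      rw [Finset.sum_eq_single s (fun i _ his => by
        by_cases hik : i = k
        · subst hik; simp [hk2]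
        · rw [hA i hik his, mul_zero]) (fun h => absurd (Finset.mem_univ s) h)] at h1
      have h1' : B (b 2) (c s) * b.repr (c s) 1 = 0 := by
        rw [← h1]
        simp [Module.Basis.repr_self, Finsupp.single_apply]
      rcases mul_eq_zero.mp h1' with h' | h'
      · exact h'
      · exact absurd h' hs1
    have h0 := E0 s
    rw [e2, hs3, hs4] at h0
    nlinarith [e1, h0]
  · -- Case B : there is a second index t with nonzero coordinate 1
    push_neg at hA
    obtain ⟨t, htk, hts, ht1⟩ := hA
    obtain ⟨ht3, ht4⟩ := hG34 t htk ht1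
    -- the two remaining indices p, q
    have hcard3 : ({k, s, t} : Finset (Fin 5)).card = 3 := by
      rw [Finset.card_insert_of_notMem (by
          simp only [Finset.mem_insert, Finset.mem_singleton]
          rintro (h | h)
          · exact hsk h.symm
          · exact htk h.symm),
        Finset.card_insert_of_notMem (by
          simp only [Finset.mem_singleton]
          intro h; exact hts h.symm),
        Finset.card_singleton]
    have hcard : (Finset.univ \ ({k, s, t} : Finset (Fin 5))).card = 2 := by
      rw [Finset.card_sdiff_of_subset (Finset.subset_univ _), hcard3]
      simp
    obtain ⟨p, q, hpq, hpqset⟩ := Finset.card_eq_two.mp hcard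
    have hmem : ∀ i : Fin 5, i ∉ ({p, q} : Finset (Fin 5)) → i = k ∨ i = s ∨ i = t := by
      intro i hi
      by_contra hco
      push_neg at hco
      have : i ∈ Finset.univ \ ({k, s, t} : Finset (Fin 5)) := by
        simp [hco.1, hco.2.1, hco.2.2]
      rw [hpqset] at this
      exact hi this
    have hpk : p ≠ k := by
      have hp : p ∈ Finset.univ \ ({k, s, t} : Finset (Fin 5)) := by
        rw [hpqset]; simp
      simp at hp
      exact hp.1
    have hqk : q ≠ k := by
      have hq : q ∈ Finset.univ \ ({k, s, t} : Finset (Fin 5)) := by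
        rw [hpqset]; simp
      simp at hq
      exact hq.1
    -- expansions of b 3 and b 4
    have hsumzero : ∀ (m : Fin 5), B (b m) (c k) = 0 → B (b m) (c s) = 0 → B (b m) (c t) = 0 →
        b m = B (b m) (c p) • c p + B (b m) (c q) • c q := by
      intro m hmk hms hmt
      have h := h_expand (b m)
      rw [show ∑ i, B (b m) (c i) • c i = ∑ i ∈ {p, q}, B (b m) (c i) • c i by
        refine (Finset.sum_subset (Finset.subset_univ _) ?_).symm
        intro i _ hi
        rcases hmem i hi with h' | h' | h'
        · rw [h', hmk, zero_smul]
        · rw [h', hms, zero_smul]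
        · rw [h', hmt, zero_smul], Finset.sum_pair hpq] at h
      exact h
    have hb3 := hsumzero 3 hk3 hs3 ht3
    have hb4 := hsumzero 4 hk4 hs4 ht4
    set A1 := B (b 3) (c p) with hA1d
    set A2 := B (b 4) (c p) with hA2d
    set B1 := B (b 3) (c q) with hB1d
    set B2 := B (b 4) (c q) with hB2d
    set d := A1 * B2 - B1 * A2 with hdd
    have hrel1 : B2 • b 3 - B1 • b 4 = d • c p := by
      rw [hb3, hb4, hdd]
      module
    have hrel2 : A1 • b 4 - A2 • b 3 = d • c q := by
      rw [hb3, hb4, hdd]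
      module
    by_cases hd : d = 0
    · -- then A1 = A2 = B1 = B2 = 0 and b 3 = 0, contradiction
      rw [hd, zero_smul] at hrel1 hrel2
      have eB2 : B2 = 0 := by
        have h := congrArg (fun w : L => b.repr w 3) hrel1
        simpa [Module.Basis.repr_self, Finsupp.single_apply] using h
      have eB1 : B1 = 0 := by
        have h := congrArg (fun w : L => b.repr w 4) hrel1
        have h' : B2 * 0 - B1 * 1 = 0 := by
          simpa [Module.Basis.repr_self, Finsupp.single_apply] using h
        linarith
      have eA1 : A1 = 0 := by
        have h := congrArg (fun w : L => b.repr w 4) hrel2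
        simpa [Module.Basis.repr_self, Finsupp.single_apply] using h
      have eA2 : A2 = 0 := by
        have h := congrArg (fun w : L => b.repr w 3) hrel2
        have h' : A1 * 0 - A2 * 1 = 0 := by
          simpa [Module.Basis.repr_self, Finsupp.single_apply] using h
        linarith
      rw [eA1, eB1, zero_smul, zero_smul, add_zero] at hb3
      have h := congrArg (fun w : L => b.repr w 3) hb3
      simpa [Module.Basis.repr_self] using h
    · -- d ≠ 0 : compute the coordinates of c p and c q
      have hyp1 : b.repr (c p) 1 = 0 := by
        have h := congrArg (fun w : L => b.repr w 1) hrel1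
        have h' : (0 : ℝ) = d * b.repr (c p) 1 := by
          simpa [Module.Basis.repr_self, Finsupp.single_apply] using h
        rcases mul_eq_zero.mp h'.symm with h'' | h''
        · exact absurd h'' hd
        · exact h''
      have hyp2 : b.repr (c p) 2 = 0 := by
        have h := congrArg (fun w : L => b.repr w 2) hrel1
        have h' : (0 : ℝ) = d * b.repr (c p) 2 := by
          simpa [Module.Basis.repr_self, Finsupp.single_apply] using h
        rcases mul_eq_zero.mp h'.symm with h'' | h''
        · exact absurd h'' hd
        · exact h''
      have hyp3 : d * b.repr (c p) 3 = B2 := by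
        have h := congrArg (fun w : L => b.repr w 3) hrel1
        have h' : B2 * 1 - B1 * 0 = d * b.repr (c p) 3 := by
          simpa [Module.Basis.repr_self, Finsupp.single_apply] using h
        linarith
      have hyp4 : d * b.repr (c p) 4 = -B1 := by
        have h := congrArg (fun w : L => b.repr w 4) hrel1
        have h' : B2 * 0 - B1 * 1 = d * b.repr (c p) 4 := by
          simpa [Module.Basis.repr_self, Finsupp.single_apply] using h
        linarith
      have hyq1 : b.repr (c q) 1 = 0 := by
        have h := congrArg (fun w : L => b.repr w 1) hrel2
        have h' : (0 : ℝ) = d * b.repr (c q) 1 := by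
          simpa [Module.Basis.repr_self, Finsupp.single_apply] using h
        rcases mul_eq_zero.mp h'.symm with h'' | h''
        · exact absurd h'' hd
        · exact h''
      have hyq2 : b.repr (c q) 2 = 0 := by
        have h := congrArg (fun w : L => b.repr w 2) hrel2
        have h' : (0 : ℝ) = d * b.repr (c q) 2 := by
          simpa [Module.Basis.repr_self, Finsupp.single_apply] using h
        rcases mul_eq_zero.mp h'.symm with h'' | h''
        · exact absurd h'' hd
        · exact h''
      have hyq3 : d * b.repr (c q) 3 = -A2 := by
        have h := congrArg (fun w : L => b.repr w 3) hrel2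
        have h' : A1 * 0 - A2 * 1 = d * b.repr (c q) 3 := by
          simpa [Module.Basis.repr_self, Finsupp.single_apply] using h
        linarith
      have hyq4 : d * b.repr (c q) 4 = A1 := by
        have h := congrArg (fun w : L => b.repr w 4) hrel2
        have h' : A1 * 1 - A2 * 0 = d * b.repr (c q) 4 := by
          simpa [Module.Basis.repr_self, Finsupp.single_apply] using h
        linarith
      -- the two remaining geodesic equations
      have hE0p := E0 p
      rw [hyp1, hyp2, ← hA1d, ← hA2d] at hE0p
      have hE0q := E0 q
      rw [hyq1, hyq2, ← hB1d, ← hB2d] at hE0q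
      -- E0 p : - y_p3 * A1 + 2 * y_p4 * A2 = 0  (after killing zero terms)
      apply hd
      have e1 : B2 * A1 + 2 * (B1 * A2) = 0 := by
        have h := mul_eq_zero_of_right d hE0p
        linear_combination (-A1) * hyp3 + 2 * A2 * hyp4 - h
      have e2 : A2 * B1 + 2 * (A1 * B2) = 0 := by
        have h := mul_eq_zero_of_right d hE0q
        linear_combination h + B1 * hyq3 - 2 * B2 * hyq4
      rw [hdd]
      linarith
end

section
/- Let 𝔤 be a 5-dimensional real Lie algebra with basis {X₁,X₂,X₃,X₄,X₅} satisfying [X₁,X₂] = 3X₂, [X₁,X₃] = −4X₃, [X₁,X₄] = −X₄, [X₁,X₅] = 2X₅, [X₂,X₃] = X₄, [X₂,X₄] = X₅, and all other brackets of basis elements zero. Then for every inner product on 𝔤, no geodesic vector lies in the subspace span(X₄,X₅). -/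
/-- In the Example algebra, for every inner product, no geodesic vector
lies in `span(X₄, X₅)`. -/
theorem example_algebra_no_geodesic_in_span_X4_X5
    {L : Type*} [LieRing L] [LieAlgebra ℝ L]
    (b : Module.Basis (Fin 5) ℝ L)
    (h12 : ⁅b 0, b 1⁆ = (3 : ℝ) • b 1)
    (h13 : ⁅b 0, b 2⁆ = (-4 : ℝ) • b 2)
    (h14 : ⁅b 0, b 3⁆ = -b 3)
    (h15 : ⁅b 0, b 4⁆ = (2 : ℝ) • b 4)
    (h23 : ⁅b 1, b 2⁆ = b 3)
    (h24 : ⁅b 1, b 3⁆ = b 4)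
    (h25 : ⁅b 1, b 4⁆ = 0)
    (h34 : ⁅b 2, b 3⁆ = 0)
    (h35 : ⁅b 2, b 4⁆ = 0)
    (h45 : ⁅b 3, b 4⁆ = 0)
    : ∀ B : L →ₗ[ℝ] L →ₗ[ℝ] ℝ, IsInnerProduct B →
      ∀ Y ∈ Submodule.span ℝ {b 3, b 4}, ¬ IsGeodesicVector B Y := by
  intro B hB Y hY hgeo
  obtain ⟨hY0, hg⟩ := hgeo
  obtain ⟨a, c, rfl⟩ := Submodule.mem_span_pair.mp hY
  have hbr0 : ⁅b 0, a • b 3 + c • b 4⁆ = (-a) • b 3 + (2*c) • b 4 := by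
    rw [lie_add, lie_smul, lie_smul, h14, h15]
    module
  have hbr1 : ⁅b 1, a • b 3 + c • b 4⁆ = a • b 4 := by
    rw [lie_add, lie_smul, lie_smul, h24, h25]
    module
  have h1 : -(a*(a * B (b 3) (b 3) + c * B (b 3) (b 4)))
      + 2*c*(a * B (b 4) (b 3) + c * B (b 4) (b 4)) = 0 := by
    have h := hg (b 0)
    rw [hbr0] at h
    simp only [map_add, map_smul, map_neg, LinearMap.add_apply, LinearMap.smul_apply,
      LinearMap.neg_apply, smul_eq_mul] at h
    linear_combination h
  have h2 : a*(a * B (b 4) (b 3) + c * B (b 4) (b 4)) = 0 := by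
    have h := hg (b 1)
    rw [hbr1] at h
    simp only [map_add, map_smul, LinearMap.add_apply, LinearMap.smul_apply,
      smul_eq_mul] at h
    linear_combination h
  have hpos : (0:ℝ) < a*(a * B (b 3) (b 3) + c * B (b 3) (b 4))
      + c*(a * B (b 4) (b 3) + c * B (b 4) (b 4)) := by
    have h := hB.posdef _ hY0
    have hx : B (a • b 3 + c • b 4) (a • b 3 + c • b 4)
        = a*(a * B (b 3) (b 3) + c * B (b 3) (b 4))
          + c*(a * B (b 4) (b 3) + c * B (b 4) (b 4)) := by
      simp only [map_add, map_smul, LinearMap.add_apply, LinearMap.smul_apply,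
        smul_eq_mul]
      ring
    rwa [hx] at h
  set P : ℝ := a * B (b 3) (b 3) + c * B (b 3) (b 4) with hP
  set Q : ℝ := a * B (b 4) (b 3) + c * B (b 4) (b 4) with hQ
  have e3 : c * Q ^ 2 = 0 := by linear_combination (Q/2) * h1 + (P/2) * h2
  have e5 : (c * Q) ^ 2 = 0 := by linear_combination c * e3
  have e6 : c * Q = 0 := pow_eq_zero_iff (by norm_num) |>.mp e5
  linarith [h1, hpos, e6]
end

section
/- Let 𝔤 be a 5-dimensional real Lie algebra with basis {X₁,X₂,X₃,X₄,X₅} satisfying [X₁,X₂] = 3X₂, [X₁,X₃] = −4X₃, [X₁,X₄] = −X₄, [X₁,X₅] = 2X₅, [X₂,X₃] = X₄, [X₂,X₄] = X₅, and all other brackets of basis elements zero, equipped with any inner product. Then a vector Y ∈ 𝔤 not lying in the derived algebra 𝔤' = span(X₂,X₃,X₄,X₅) is a geodesic vector if and only if Y ≠ 0 and Y is orthogonal to 𝔤'; in particular, up to a nonzero scalar multiple there is exactly one geodesic vector not lying in 𝔤'. -/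
/-- In the Example algebra with any inner product, a vector not lying in
the derived algebra `span(X₂,X₃,X₄,X₅)` is geodesic iff it is nonzero and orthogonal
to the derived algebra; in particular there is, up to nonzero scalar, exactly one
geodesic vector outside the derived algebra. -/
theorem example_algebra_geodesics_outside_derived
    {L : Type*} [LieRing L] [LieAlgebra ℝ L]
    (b : Module.Basis (Fin 5) ℝ L)
    (h12 : ⁅b 0, b 1⁆ = (3 : ℝ) • b 1)
    (h13 : ⁅b 0, b 2⁆ = (-4 : ℝ) • b 2)
    (h14 : ⁅b 0, b 3⁆ = -b 3)
    (h15 : ⁅b 0, b 4⁆ = (2 : ℝ) • b 4)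
    (h23 : ⁅b 1, b 2⁆ = b 3)
    (h24 : ⁅b 1, b 3⁆ = b 4)
    (h25 : ⁅b 1, b 4⁆ = 0)
    (h34 : ⁅b 2, b 3⁆ = 0)
    (h35 : ⁅b 2, b 4⁆ = 0)
    (h45 : ⁅b 3, b 4⁆ = 0)
    : ∀ B : L →ₗ[ℝ] L →ₗ[ℝ] ℝ, IsInnerProduct B →
      (∀ Y : L, Y ∉ Submodule.span ℝ {b 1, b 2, b 3, b 4} →
        (IsGeodesicVector B Y ↔
          (Y ≠ 0 ∧ ∀ v ∈ Submodule.span ℝ {b 1, b 2, b 3, b 4}, B Y v = 0))) ∧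
      (∃ Y : L, Y ∉ Submodule.span ℝ {b 1, b 2, b 3, b 4} ∧ IsGeodesicVector B Y) ∧
      (∀ Y Z : L, Y ∉ Submodule.span ℝ {b 1, b 2, b 3, b 4} →
        Z ∉ Submodule.span ℝ {b 1, b 2, b 3, b 4} →
        IsGeodesicVector B Y → IsGeodesicVector B Z →
        ∃ c : ℝ, c ≠ 0 ∧ Z = c • Y) := by
  
  intro B hB
  classical
  haveI : FiniteDimensional ℝ L := b.finiteDimensional_of_finite
  set S : Submodule ℝ L := Submodule.span ℝ {b 1, b 2, b 3, b 4} with hSdef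
  have hb1 : b 1 ∈ S := Submodule.subset_span (by simp)
  have hb2 : b 2 ∈ S := Submodule.subset_span (by simp)
  have hb3 : b 3 ∈ S := Submodule.subset_span (by simp)
  have hb4 : b 4 ∈ S := Submodule.subset_span (by simp)
  -- reversed bracket relations
  have h21 : ⁅b 1, b 0⁆ = -((3 : ℝ) • b 1) := by rw [← lie_skew, h12]
  have h31 : ⁅b 2, b 0⁆ = -((-4 : ℝ) • b 2) := by rw [← lie_skew, h13]
  have h41 : ⁅b 3, b 0⁆ = -(-b 3) := by rw [← lie_skew, h14]
  have h51 : ⁅b 4, b 0⁆ = -((2 : ℝ) • b 4) := by rw [← lie_skew, h15]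
  have h32 : ⁅b 2, b 1⁆ = -b 3 := by rw [← lie_skew, h23]
  have h42 : ⁅b 3, b 1⁆ = -b 4 := by rw [← lie_skew, h24]
  have h52 : ⁅b 4, b 1⁆ = 0 := by rw [← lie_skew, h25, neg_zero]
  have h43 : ⁅b 3, b 2⁆ = 0 := by rw [← lie_skew, h34, neg_zero]
  have h53 : ⁅b 4, b 2⁆ = 0 := by rw [← lie_skew, h35, neg_zero]
  have h54 : ⁅b 4, b 3⁆ = 0 := by rw [← lie_skew, h45, neg_zero]
  have key : ∀ i j : Fin 5, ⁅b i, b j⁆ ∈ S := by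
    intro i j
    fin_cases i <;> fin_cases j <;>
      simp only [Fin.zero_eta, Fin.mk_one, Fin.reduceFinMk, lie_self, h12, h13, h14, h15, h23, h24, h25, h34, h35, h45,
        h21, h31, h41, h51, h32, h42, h52, h43, h53, h54] <;>
      first
        | exact S.zero_mem
        | exact hb3 | exact hb4
        | exact S.neg_mem hb3 | exact S.neg_mem hb4
        | exact S.neg_mem (S.neg_mem hb3)
        | exact S.smul_mem _ hb1 | exact S.smul_mem _ hb2 | exact S.smul_mem _ hb4
        | exact S.neg_mem (S.smul_mem _ hb1)
        | exact S.neg_mem (S.smul_mem _ hb2)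
        | exact S.neg_mem (S.smul_mem _ hb4)
  have hmemtop : ∀ x : L, x ∈ Submodule.span ℝ (Set.range b) := fun x => by
    rw [b.span_eq]; exact Submodule.mem_top
  have brmem : ∀ X Z : L, ⁅X, Z⁆ ∈ S := by
    intro X Z
    induction hmemtop X, hmemtop Z using Submodule.span_induction₂ with
    | mem_mem x y hx hy =>
        obtain ⟨i, rfl⟩ := hx; obtain ⟨j, rfl⟩ := hy; exact key i j
    | zero_left y hy => rw [zero_lie]; exact S.zero_mem
    | zero_right x hx => rw [lie_zero]; exact S.zero_mem
    | add_left x y z hx hy hz h1 h2 => rw [add_lie]; exact S.add_mem h1 h2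
    | add_right x y z hx hy hz h1 h2 => rw [lie_add]; exact S.add_mem h1 h2
    | smul_left r x y hx hy h => rw [smul_lie]; exact S.smul_mem r h
    | smul_right r x y hx hy h => rw [lie_smul]; exact S.smul_mem r h
  have main : ∀ Y : L, Y ∉ S →
      (IsGeodesicVector B Y ↔ (Y ≠ 0 ∧ ∀ v ∈ S, B Y v = 0)) := by
    intro Y hYS
    constructor
    · rintro ⟨hY0, hg⟩
      refine ⟨hY0, ?_⟩
      set y0 := b.repr Y 0 with hy0def
      set y1 := b.repr Y 1 with hy1def
      set y2 := b.repr Y 2 with hy2def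
      set y3 := b.repr Y 3 with hy3def
      set y4 := b.repr Y 4 with hy4def
      have hYexp : Y = y0 • b 0 + y1 • b 1 + y2 • b 2 + y3 • b 3 + y4 • b 4 := by
        have := (b.sum_repr Y).symm
        rwa [Fin.sum_univ_five] at this
      have hy0 : y0 ≠ 0 := by
        intro h0
        apply hYS
        rw [hSdef]
        rw [hYexp, h0, zero_smul, zero_add]
        exact S.add_mem (S.add_mem (S.add_mem (S.smul_mem _ hb1) (S.smul_mem _ hb2))
          (S.smul_mem _ hb3)) (S.smul_mem _ hb4)
      have l4 : ⁅b 4, Y⁆ = (-(2 * y0)) • b 4 := by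
        conv_lhs => rw [hYexp]
        simp only [lie_add, lie_smul, h51, h52, h53, h54, lie_self]
        module
      have l3 : ⁅b 3, Y⁆ = y0 • b 3 + (-y1) • b 4 := by
        conv_lhs => rw [hYexp]
        simp only [lie_add, lie_smul, h41, h42, h43, h45, lie_self]
        module
      have l2 : ⁅b 2, Y⁆ = (4 * y0) • b 2 + (-y1) • b 3 := by
        conv_lhs => rw [hYexp]
        simp only [lie_add, lie_smul, h31, h32, h34, h35, lie_self]
        module
      have l1 : ⁅b 1, Y⁆ = (-(3 * y0)) • b 1 + y2 • b 3 + y3 • b 4 := by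
        conv_lhs => rw [hYexp]
        simp only [lie_add, lie_smul, h21, h23, h24, h25, lie_self]
        module
      have c4 : B (b 4) Y = 0 := by
        have h := hg (b 4)
        rw [l4] at h
        simp only [map_smul, LinearMap.smul_apply, smul_eq_mul] at h
        rcases mul_eq_zero.mp h with h' | h'
        · exact absurd h' (by simp [hy0])
        · exact h'
      have c3 : B (b 3) Y = 0 := by
        have h := hg (b 3)
        rw [l3] at h
        simp only [map_add, map_smul, LinearMap.add_apply, LinearMap.smul_apply,
          smul_eq_mul, c4, mul_zero, add_zero] at h
        rcases mul_eq_zero.mp h with h' | h'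
        · exact absurd h' hy0
        · exact h'
      have c2 : B (b 2) Y = 0 := by
        have h := hg (b 2)
        rw [l2] at h
        simp only [map_add, map_smul, LinearMap.add_apply, LinearMap.smul_apply,
          smul_eq_mul, c3, mul_zero, add_zero] at h
        rcases mul_eq_zero.mp h with h' | h'
        · exact absurd h' (by simp [hy0])
        · exact h'
      have c1 : B (b 1) Y = 0 := by
        have h := hg (b 1)
        rw [l1] at h
        simp only [map_add, map_smul, LinearMap.add_apply, LinearMap.smul_apply,
          smul_eq_mul, c3, c4, mul_zero, add_zero] at h
        rcases mul_eq_zero.mp h with h' | h'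
        · exact absurd h' (by simp [hy0])
        · exact h'
      intro v hv
      have hle : S ≤ LinearMap.ker (B Y) := by
        rw [hSdef]
        apply Submodule.span_le.mpr
        intro x hx
        simp only [Set.mem_insert_iff, Set.mem_singleton_iff] at hx
        rcases hx with rfl | rfl | rfl | rfl <;>
          simp only [SetLike.mem_coe, LinearMap.mem_ker] <;>
          rw [hB.symm]
        · exact c1
        · exact c2
        · exact c3
        · exact c4
      exact LinearMap.mem_ker.mp (hle hv)
    · rintro ⟨h0, horth⟩
      exact ⟨h0, fun X => by rw [hB.symm]; exact horth _ (brmem X Y)⟩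
  set c : Fin 4 → L := ![b 1, b 2, b 3, b 4] with hcdef
  have hcS : ∀ i, c i ∈ S := by
    intro i
    fin_cases i
    · exact hb1
    · exact hb2
    · exact hb3
    · exact hb4
  set φ : L →ₗ[ℝ] (Fin 4 → ℝ) := LinearMap.pi (fun i => B.flip (c i)) with hφdef
  set K : Submodule ℝ L := LinearMap.ker φ with hKdef
  have hK : ∀ x : L, x ∈ K ↔ ∀ i : Fin 4, B x (c i) = 0 := by
    intro x
    simp [hKdef, hφdef, LinearMap.mem_ker, funext_iff, LinearMap.pi_apply]
  have hK' : ∀ x : L, x ∈ K ↔ ∀ v ∈ S, B x v = 0 := by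
    intro x
    constructor
    · intro hx v hv
      have hx' := (hK x).mp hx
      have hle : S ≤ LinearMap.ker (B x) := by
        rw [hSdef]
        apply Submodule.span_le.mpr
        intro z hz
        simp only [Set.mem_insert_iff, Set.mem_singleton_iff] at hz
        rcases hz with rfl | rfl | rfl | rfl
        · exact LinearMap.mem_ker.mpr (hx' 0)
        · exact LinearMap.mem_ker.mpr (hx' 1)
        · exact LinearMap.mem_ker.mpr (hx' 2)
        · exact LinearMap.mem_ker.mpr (hx' 3)
      exact LinearMap.mem_ker.mp (hle hv)
    · intro h
      exact (hK x).mpr fun i => h _ (hcS i)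
  have hKS : K ⊓ S = ⊥ := by
    rw [eq_bot_iff]
    rintro v ⟨hvK, hvS⟩
    rw [Submodule.mem_bot]
    by_contra hv0
    have hpos := hB.posdef v hv0
    have hzero : B v v = 0 := (hK' v).mp hvK v hvS
    rw [hzero] at hpos
    exact lt_irrefl 0 hpos
  have hfrL : Module.finrank ℝ L = 5 := by
    rw [Module.finrank_eq_card_basis b]; simp
  have hlin : LinearIndependent ℝ c := by
    have hc : c = b ∘ ![1, 2, 3, 4] := by
      funext i; fin_cases i <;> rfl
    rw [hc]
    exact b.linearIndependent.comp _ (by decide)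
  have hrange : Set.range c = {b 1, b 2, b 3, b 4} := by
    ext x
    constructor
    · rintro ⟨i, rfl⟩
      fin_cases i <;> simp [hcdef]
    · intro hx
      simp only [Set.mem_insert_iff, Set.mem_singleton_iff] at hx
      rcases hx with rfl | rfl | rfl | rfl
      exacts [⟨0, rfl⟩, ⟨1, rfl⟩, ⟨2, rfl⟩, ⟨3, rfl⟩]
  have hfrS : Module.finrank ℝ S = 4 := by
    rw [hSdef, ← hrange, finrank_span_eq_card hlin]
    simp
  have hfrK1 : 1 ≤ Module.finrank ℝ K := by
    have h1 := LinearMap.finrank_range_add_finrank_ker φ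
    rw [hfrL] at h1
    have h2 : Module.finrank ℝ (LinearMap.range φ) ≤ 4 := by
      have := Submodule.finrank_le (LinearMap.range φ)
      simpa [Module.finrank_fin_fun] using this
    rw [hKdef]
    omega
  have hfrKle : Module.finrank ℝ K ≤ 1 := by
    have h1 := Submodule.finrank_sup_add_finrank_inf_eq K S
    rw [hKS, hfrS, finrank_bot, add_zero] at h1
    have h2 : Module.finrank ℝ (K ⊔ S : Submodule ℝ L) ≤ 5 := by
      have := Submodule.finrank_le (K ⊔ S)
      rw [hfrL] at this
      exact this
    omega
  have hnotS : ∀ x : L, x ∈ K → x ≠ 0 → x ∉ S := by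
    intro x hxK hx0 hxS
    have : x ∈ K ⊓ S := ⟨hxK, hxS⟩
    rw [hKS, Submodule.mem_bot] at this
    exact hx0 this
  refine ⟨main, ?_, ?_⟩
  · -- existence
    have hne : K ≠ ⊥ := by
      intro h
      rw [h, finrank_bot] at hfrK1
      omega
    obtain ⟨Y, hYK, hY0⟩ := (Submodule.ne_bot_iff K).mp hne
    have hYnS : Y ∉ S := hnotS Y hYK hY0
    exact ⟨Y, hYnS, (main Y hYnS).mpr ⟨hY0, (hK' Y).mp hYK⟩⟩
  · -- uniqueness
    intro Y Z hYnS hZnS hgY hgZ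
    have hY0 : Y ≠ 0 := hgY.1
    have hZ0 : Z ≠ 0 := hgZ.1
    have hYK : Y ∈ K := (hK' Y).mpr ((main Y hYnS).mp hgY).2
    have hZK : Z ∈ K := (hK' Z).mpr ((main Z hZnS).mp hgZ).2
    have hsp : Submodule.span ℝ {Y} = K := by
      apply Submodule.eq_of_le_of_finrank_le
      · rw [Submodule.span_singleton_le_iff_mem]; exact hYK
      · rw [finrank_span_singleton hY0]; exact hfrKle
    have hZsp : Z ∈ Submodule.span ℝ ({Y} : Set L) := by rw [hsp]; exact hZK
    obtain ⟨cc, hcc⟩ := Submodule.mem_span_singleton.mp hZsp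
    refine ⟨cc, ?_, hcc.symm⟩
    intro h
    apply hZ0
    rw [← hcc, h, zero_smul]
end

section
/- Let 𝔤 be a 5-dimensional real Lie algebra with basis {X₁,X₂,X₃,X₄,X₅} satisfying [X₁,X₂] = 3X₂, [X₁,X₃] = −4X₃, [X₁,X₄] = −X₄, [X₁,X₅] = 2X₅, [X₂,X₃] = X₄, [X₂,X₄] = X₅, and all other brackets of basis elements zero, equipped with any inner product. If Y = a₂X₂ + a₃X₃ + a₄X₄ + a₅X₅ with a₂ ≠ 0 is a geodesic vector, then Y is orthogonal to span(X₄,X₅). -/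
/-- In the Example algebra with any inner product, a geodesic vector
`Y = a₂X₂ + a₃X₃ + a₄X₄ + a₅X₅` with `a₂ ≠ 0` is orthogonal to `span(X₄,X₅)`. -/
theorem example_algebra_geodesic_in_V2_orthogonal_V4
    {L : Type*} [LieRing L] [LieAlgebra ℝ L]
    (b : Module.Basis (Fin 5) ℝ L)
    (h12 : ⁅b 0, b 1⁆ = (3 : ℝ) • b 1)
    (h13 : ⁅b 0, b 2⁆ = (-4 : ℝ) • b 2)
    (h14 : ⁅b 0, b 3⁆ = -b 3)
    (h15 : ⁅b 0, b 4⁆ = (2 : ℝ) • b 4)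
    (h23 : ⁅b 1, b 2⁆ = b 3)
    (h24 : ⁅b 1, b 3⁆ = b 4)
    (h25 : ⁅b 1, b 4⁆ = 0)
    (h34 : ⁅b 2, b 3⁆ = 0)
    (h35 : ⁅b 2, b 4⁆ = 0)
    (h45 : ⁅b 3, b 4⁆ = 0)
    : ∀ B : L →ₗ[ℝ] L →ₗ[ℝ] ℝ, IsInnerProduct B →
      ∀ a₂ a₃ a₄ a₅ : ℝ, a₂ ≠ 0 →
        IsGeodesicVector B (a₂ • b 1 + a₃ • b 2 + a₄ • b 3 + a₅ • b 4) →
        ∀ v ∈ Submodule.span ℝ {b 3, b 4},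
          B (a₂ • b 1 + a₃ • b 2 + a₄ • b 3 + a₅ • b 4) v = 0 := by
  intro B hB a₂ a₃ a₄ a₅ ha hG v hv
  set Y := a₂ • b 1 + a₃ • b 2 + a₄ • b 3 + a₅ • b 4 with hY
  have hbr2 : ⁅b 2, Y⁆ = (-a₂) • b 3 := by
    have : ⁅b 2, b 1⁆ = -b 3 := by rw [← lie_skew, h23]
    simp [hY, lie_add, lie_smul, this, h34, h35, neg_smul]
  have hbr3 : ⁅b 3, Y⁆ = (-a₂) • b 4 := by
    have h1 : ⁅b 3, b 1⁆ = -b 4 := by rw [← lie_skew, h24]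
    have h2 : ⁅b 3, b 2⁆ = 0 := by rw [← lie_skew, h34, neg_zero]
    simp [hY, lie_add, lie_smul, h1, h2, h45, neg_smul]
  have hb3 : B (b 3) Y = 0 := by
    have := hG.2 (b 2)
    rw [hbr2] at this
    simp only [map_smul, LinearMap.smul_apply, smul_eq_mul] at this
    rcases mul_eq_zero.mp this with h | h
    · exact absurd (neg_eq_zero.mp h) ha
    · exact h
  have hb4 : B (b 4) Y = 0 := by
    have := hG.2 (b 3)
    rw [hbr3] at this
    simp only [map_smul, LinearMap.smul_apply, smul_eq_mul] at this
    rcases mul_eq_zero.mp this with h | h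
    · exact absurd (neg_eq_zero.mp h) ha
    · exact h
  obtain ⟨c, d, rfl⟩ := Submodule.mem_span_pair.mp hv
  simp [map_add, map_smul, hB.symm Y (b 3), hB.symm Y (b 4), hb3, hb4]
end

section
/- Let 𝔤 be a 5-dimensional real Lie algebra with basis {X₁,X₂,X₃,X₄,X₅} satisfying [X₁,X₂] = 3X₂, [X₁,X₃] = −4X₃, [X₁,X₄] = −X₄, [X₁,X₅] = 2X₅, [X₂,X₃] = X₄, [X₂,X₄] = X₅, and all other brackets of basis elements zero, equipped with the inner product making {X₁,…,X₅} orthonormal. Then the span of the set of all geodesic vectors of 𝔤 equals the orthogonal complement of X₄; in particular the geodesic vectors do not span 𝔤. -/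
set_option maxHeartbeats 1000000 in
/-- For the Example algebra with the inner product making `X₁,…,X₅`
orthonormal, the span of the geodesic vectors is exactly the orthogonal complement of
`X₄`; in particular the geodesic vectors do not span the algebra. -/
theorem example_algebra_orthonormal_inner_product_geodesic_span
    {L : Type*} [LieRing L] [LieAlgebra ℝ L]
    (b : Module.Basis (Fin 5) ℝ L)
    (h12 : ⁅b 0, b 1⁆ = (3 : ℝ) • b 1)
    (h13 : ⁅b 0, b 2⁆ = (-4 : ℝ) • b 2)
    (h14 : ⁅b 0, b 3⁆ = -b 3)
    (h15 : ⁅b 0, b 4⁆ = (2 : ℝ) • b 4)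
    (h23 : ⁅b 1, b 2⁆ = b 3)
    (h24 : ⁅b 1, b 3⁆ = b 4)
    (h25 : ⁅b 1, b 4⁆ = 0)
    (h34 : ⁅b 2, b 3⁆ = 0)
    (h35 : ⁅b 2, b 4⁆ = 0)
    (h45 : ⁅b 3, b 4⁆ = 0)
    : ∀ B : L →ₗ[ℝ] L →ₗ[ℝ] ℝ, IsInnerProduct B → IsOrthonormalFamily B b →
      ((Submodule.span ℝ {Y : L | IsGeodesicVector B Y} : Set L)
          = {v : L | B v (b 3) = 0} ∧
        Submodule.span ℝ {Y : L | IsGeodesicVector B Y} ≠ ⊤) := by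

  intro B hIP hB
  have h21 : ⁅b 1, b 0⁆ = (-3 : ℝ) • b 1 := by rw [← lie_skew, h12]; module
  have h31 : ⁅b 2, b 0⁆ = (4 : ℝ) • b 2 := by rw [← lie_skew, h13]; module
  have h41 : ⁅b 3, b 0⁆ = b 3 := by rw [← lie_skew, h14]; module
  have h51 : ⁅b 4, b 0⁆ = (-2 : ℝ) • b 4 := by rw [← lie_skew, h15]; module
  have h32 : ⁅b 2, b 1⁆ = -b 3 := by rw [← lie_skew, h23]
  have h42 : ⁅b 3, b 1⁆ = -b 4 := by rw [← lie_skew, h24]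
  have h52 : ⁅b 4, b 1⁆ = 0 := by rw [← lie_skew, h25, neg_zero]
  have h43 : ⁅b 3, b 2⁆ = 0 := by rw [← lie_skew, h34, neg_zero]
  have h53 : ⁅b 4, b 2⁆ = 0 := by rw [← lie_skew, h35, neg_zero]
  have h54 : ⁅b 4, b 3⁆ = 0 := by rw [← lie_skew, h45, neg_zero]
  have hB' : ∀ i j, B (b i) (b j) = if i = j then (1:ℝ) else 0 := hB
  have Bsum : ∀ c d : Fin 5 → ℝ,
      B (∑ i, c i • b i) (∑ j, d j • b j) = ∑ i, c i * d i := by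
    intro c d
    simp only [map_sum, map_smul, LinearMap.sum_apply, LinearMap.smul_apply, smul_eq_mul, hB',
      mul_ite, mul_one, mul_zero, Finset.sum_ite_eq, Finset.sum_ite_eq', Finset.mem_univ, if_true]
    exact Finset.sum_congr rfl fun i _ => by ring
  have br0 : ∀ c : Fin 5 → ℝ, ⁅b 0, ∑ i, c i • b i⁆
      = ∑ i, (![0, 3 * c 1, -4 * c 2, -(c 3), 2 * c 4] : Fin 5 → ℝ) i • b i := by
    intro c
    simp only [Fin.sum_univ_five, lie_add, lie_smul, lie_self, h12, h13, h14, h15,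
      Matrix.cons_val_zero, Matrix.cons_val_one, Matrix.head_cons, Matrix.cons_val_two,
      Matrix.tail_cons, Matrix.cons_val_three, Matrix.cons_val_four, smul_zero]
    module
  have br1 : ∀ c : Fin 5 → ℝ, ⁅b 1, ∑ i, c i • b i⁆
      = ∑ i, (![0, -3 * c 0, 0, c 2, c 3] : Fin 5 → ℝ) i • b i := by
    intro c
    simp only [Fin.sum_univ_five, lie_add, lie_smul, lie_self, h21, h23, h24, h25,
      Matrix.cons_val_zero, Matrix.cons_val_one, Matrix.head_cons, Matrix.cons_val_two,
      Matrix.tail_cons, Matrix.cons_val_three, Matrix.cons_val_four, smul_zero]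
    module
  have br2 : ∀ c : Fin 5 → ℝ, ⁅b 2, ∑ i, c i • b i⁆
      = ∑ i, (![0, 0, 4 * c 0, -(c 1), 0] : Fin 5 → ℝ) i • b i := by
    intro c
    simp only [Fin.sum_univ_five, lie_add, lie_smul, lie_self, h31, h32, h34, h35,
      Matrix.cons_val_zero, Matrix.cons_val_one, Matrix.head_cons, Matrix.cons_val_two,
      Matrix.tail_cons, Matrix.cons_val_three, Matrix.cons_val_four, smul_zero]
    module
  have br3 : ∀ c : Fin 5 → ℝ, ⁅b 3, ∑ i, c i • b i⁆
      = ∑ i, (![0, 0, 0, c 0, -(c 1)] : Fin 5 → ℝ) i • b i := by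
    intro c
    simp only [Fin.sum_univ_five, lie_add, lie_smul, lie_self, h41, h42, h43, h45,
      Matrix.cons_val_zero, Matrix.cons_val_one, Matrix.head_cons, Matrix.cons_val_two,
      Matrix.tail_cons, Matrix.cons_val_three, Matrix.cons_val_four, smul_zero]
    module
  have br4 : ∀ c : Fin 5 → ℝ, ⁅b 4, ∑ i, c i • b i⁆
      = ∑ i, (![0, 0, 0, 0, -2 * c 0] : Fin 5 → ℝ) i • b i := by
    intro c
    simp only [Fin.sum_univ_five, lie_add, lie_smul, lie_self, h51, h52, h53, h54,
      Matrix.cons_val_zero, Matrix.cons_val_one, Matrix.head_cons, Matrix.cons_val_two,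
      Matrix.tail_cons, Matrix.cons_val_three, Matrix.cons_val_four, smul_zero]
    module
  have E0 : ∀ c : Fin 5 → ℝ, B ⁅b 0, ∑ i, c i • b i⁆ (∑ i, c i • b i)
      = 3 * c 1 * c 1 - 4 * c 2 * c 2 - c 3 * c 3 + 2 * c 4 * c 4 := by
    intro c; rw [br0, Bsum, Fin.sum_univ_five]
    simp only [Matrix.cons_val_zero, Matrix.cons_val_one, Matrix.head_cons, Matrix.cons_val_two,
      Matrix.tail_cons, Matrix.cons_val_three, Matrix.cons_val_four]
    ring
  have E1 : ∀ c : Fin 5 → ℝ, B ⁅b 1, ∑ i, c i • b i⁆ (∑ i, c i • b i)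
      = -3 * c 0 * c 1 + c 2 * c 3 + c 3 * c 4 := by
    intro c; rw [br1, Bsum, Fin.sum_univ_five]
    simp only [Matrix.cons_val_zero, Matrix.cons_val_one, Matrix.head_cons, Matrix.cons_val_two,
      Matrix.tail_cons, Matrix.cons_val_three, Matrix.cons_val_four]
    ring
  have E2 : ∀ c : Fin 5 → ℝ, B ⁅b 2, ∑ i, c i • b i⁆ (∑ i, c i • b i)
      = 4 * c 0 * c 2 - c 1 * c 3 := by
    intro c; rw [br2, Bsum, Fin.sum_univ_five]
    simp only [Matrix.cons_val_zero, Matrix.cons_val_one, Matrix.head_cons, Matrix.cons_val_two,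
      Matrix.tail_cons, Matrix.cons_val_three, Matrix.cons_val_four]
    ring
  have E3 : ∀ c : Fin 5 → ℝ, B ⁅b 3, ∑ i, c i • b i⁆ (∑ i, c i • b i)
      = c 0 * c 3 - c 1 * c 4 := by
    intro c; rw [br3, Bsum, Fin.sum_univ_five]
    simp only [Matrix.cons_val_zero, Matrix.cons_val_one, Matrix.head_cons, Matrix.cons_val_two,
      Matrix.tail_cons, Matrix.cons_val_three, Matrix.cons_val_four]
    ring
  have E4 : ∀ c : Fin 5 → ℝ, B ⁅b 4, ∑ i, c i • b i⁆ (∑ i, c i • b i)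
      = -2 * c 0 * c 4 := by
    intro c; rw [br4, Bsum, Fin.sum_univ_five]
    simp only [Matrix.cons_val_zero, Matrix.cons_val_one, Matrix.head_cons, Matrix.cons_val_two,
      Matrix.tail_cons, Matrix.cons_val_three, Matrix.cons_val_four]
    ring
  -- geodesic condition reduces to basis directions
  have geo_of : ∀ Y : L, (∀ k : Fin 5, B ⁅b k, Y⁆ Y = 0) → ∀ X : L, B ⁅X, Y⁆ Y = 0 := by
    intro Y h X
    conv_lhs => rw [← b.sum_repr X, Fin.sum_univ_five]
    simp only [add_lie, smul_lie, map_add, map_smul, LinearMap.add_apply, LinearMap.smul_apply,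
      h, smul_eq_mul, mul_zero, add_zero]
  -- constructor for geodesic vectors
  have geo_mk : ∀ c : Fin 5 → ℝ, (∑ i, c i * c i) ≠ 0 →
      3 * c 1 * c 1 - 4 * c 2 * c 2 - c 3 * c 3 + 2 * c 4 * c 4 = 0 →
      -3 * c 0 * c 1 + c 2 * c 3 + c 3 * c 4 = 0 →
      4 * c 0 * c 2 - c 1 * c 3 = 0 →
      c 0 * c 3 - c 1 * c 4 = 0 →
      -2 * c 0 * c 4 = 0 →
      IsGeodesicVector B (∑ i, c i • b i) := by
    intro c hnz q0 q1 q2 q3 q4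
    refine ⟨fun h0 => hnz (by rw [← Bsum c c, h0]; simp), geo_of _ ?_⟩
    intro k
    fin_cases k
    · exact (E0 c).trans q0
    · exact (E1 c).trans q1
    · exact (E2 c).trans q2
    · exact (E3 c).trans q3
    · exact (E4 c).trans q4
  -- the geodesic set and its span
  set S : Set L := {Y : L | IsGeodesicVector B Y} with hS
  -- candidate geodesic vectors
  have sq3 : Real.sqrt 3 ^ 2 = 3 := Real.sq_sqrt (by norm_num)
  have sq2 : Real.sqrt 2 ^ 2 = 2 := Real.sq_sqrt (by norm_num)
  have hg0 : IsGeodesicVector B (∑ i, (![1,0,0,0,0] : Fin 5 → ℝ) i • b i) := by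
    refine geo_mk _ ?_ ?_ ?_ ?_ ?_ ?_ <;>
      · simp only [Fin.sum_univ_five, Matrix.cons_val_zero, Matrix.cons_val_one, Matrix.head_cons, Matrix.cons_val_two, Matrix.tail_cons, Matrix.cons_val_three, Matrix.cons_val_four]
        ring_nf
        try norm_num [sq3, sq2]
  have hg1 : IsGeodesicVector B (∑ i, (![0,2,Real.sqrt 3,0,0] : Fin 5 → ℝ) i • b i) := by
    refine geo_mk _ ?_ ?_ ?_ ?_ ?_ ?_ <;>
      · simp only [Fin.sum_univ_five, Matrix.cons_val_zero, Matrix.cons_val_one, Matrix.head_cons, Matrix.cons_val_two, Matrix.tail_cons, Matrix.cons_val_three, Matrix.cons_val_four]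
        ring_nf
        try norm_num [sq3, sq2]
  have hg1' : IsGeodesicVector B (∑ i, (![0,2,-Real.sqrt 3,0,0] : Fin 5 → ℝ) i • b i) := by
    refine geo_mk _ ?_ ?_ ?_ ?_ ?_ ?_ <;>
      · simp only [Fin.sum_univ_five, Matrix.cons_val_zero, Matrix.cons_val_one, Matrix.head_cons, Matrix.cons_val_two, Matrix.tail_cons, Matrix.cons_val_three, Matrix.cons_val_four]
        ring_nf
        try norm_num [sq3, sq2]
  have hg2 : IsGeodesicVector B (∑ i, (![0,0,1,0,Real.sqrt 2] : Fin 5 → ℝ) i • b i) := by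
    refine geo_mk _ ?_ ?_ ?_ ?_ ?_ ?_ <;>
      · simp only [Fin.sum_univ_five, Matrix.cons_val_zero, Matrix.cons_val_one, Matrix.head_cons, Matrix.cons_val_two, Matrix.tail_cons, Matrix.cons_val_three, Matrix.cons_val_four]
        ring_nf
        try norm_num [sq3, sq2]
  have hg2' : IsGeodesicVector B (∑ i, (![0,0,1,0,-Real.sqrt 2] : Fin 5 → ℝ) i • b i) := by
    refine geo_mk _ ?_ ?_ ?_ ?_ ?_ ?_ <;>
      · simp only [Fin.sum_univ_five, Matrix.cons_val_zero, Matrix.cons_val_one, Matrix.head_cons, Matrix.cons_val_two, Matrix.tail_cons, Matrix.cons_val_three, Matrix.cons_val_four]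
        ring_nf
        try norm_num [sq3, sq2]
  -- basis vectors 0,1,2,4 lie in the span of S
  have m0 : b 0 ∈ Submodule.span ℝ S := by
    have := Submodule.subset_span (R := ℝ) (s := S) hg0
    have he : (∑ i, (![1,0,0,0,0] : Fin 5 → ℝ) i • b i) = b 0 := by
      simp [Fin.sum_univ_five]
    rwa [he] at this
  have m2 : b 2 ∈ Submodule.span ℝ S := by
    have hA := Submodule.subset_span (R := ℝ) (s := S) hg2
    have hA' := Submodule.subset_span (R := ℝ) (s := S) hg2'
    have he : b 2 = (1/2 : ℝ) • ((∑ i, (![0,0,1,0,Real.sqrt 2] : Fin 5 → ℝ) i • b i)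
        + (∑ i, (![0,0,1,0,-Real.sqrt 2] : Fin 5 → ℝ) i • b i)) := by
      simp [Fin.sum_univ_five]
      try module
    rw [he]
    exact Submodule.smul_mem _ _ (Submodule.add_mem _ hA hA')
  have m4 : b 4 ∈ Submodule.span ℝ S := by
    have hA := Submodule.subset_span (R := ℝ) (s := S) hg2
    have hA' := Submodule.subset_span (R := ℝ) (s := S) hg2'
    have hd : (∑ i, (![0,0,1,0,Real.sqrt 2] : Fin 5 → ℝ) i • b i)
        - (∑ i, (![0,0,1,0,-Real.sqrt 2] : Fin 5 → ℝ) i • b i) = (2 * Real.sqrt 2) • b 4 := by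
      simp only [Fin.sum_univ_five, Matrix.cons_val_zero, Matrix.cons_val_one, Matrix.head_cons, Matrix.cons_val_two, Matrix.tail_cons, Matrix.cons_val_three, Matrix.cons_val_four]
      module
    have hs2 : (2 * Real.sqrt 2 : ℝ) ≠ 0 := by positivity
    have he : b 4 = (2 * Real.sqrt 2 : ℝ)⁻¹ • ((∑ i, (![0,0,1,0,Real.sqrt 2] : Fin 5 → ℝ) i • b i)
        - (∑ i, (![0,0,1,0,-Real.sqrt 2] : Fin 5 → ℝ) i • b i)) := by
      rw [hd, smul_smul, inv_mul_cancel₀ hs2, one_smul]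
    rw [he]
    exact Submodule.smul_mem _ _ (Submodule.sub_mem _ hA hA')
  have m1 : b 1 ∈ Submodule.span ℝ S := by
    have hA := Submodule.subset_span (R := ℝ) (s := S) hg1
    have he : b 1 = (1/2 : ℝ) • ((∑ i, (![0,2,Real.sqrt 3,0,0] : Fin 5 → ℝ) i • b i)
        - Real.sqrt 3 • b 2) := by
      simp [Fin.sum_univ_five]
      try module
    rw [he]
    exact Submodule.smul_mem _ _ (Submodule.sub_mem _ hA (Submodule.smul_mem _ _ m2))
  -- B v (b 3) computes the third coordinate
  have keyB : ∀ v : L, B v (b 3) = b.repr v 3 := by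
    intro v
    conv_lhs => rw [← b.sum_repr v]
    have hb3 : b 3 = ∑ i, (![0,0,0,1,0] : Fin 5 → ℝ) i • b i := by simp [Fin.sum_univ_five]
    rw [hb3, Bsum, Fin.sum_univ_five]
    simp
  -- every geodesic vector has vanishing third coordinate
  have geo_coord : ∀ Y : L, IsGeodesicVector B Y → b.repr Y 3 = 0 := by
    intro Y hY
    set c : Fin 5 → ℝ := fun i => b.repr Y i with hc
    have hYe : Y = ∑ i, c i • b i := (b.sum_repr Y).symm
    have e0 : 3 * c 1 * c 1 - 4 * c 2 * c 2 - c 3 * c 3 + 2 * c 4 * c 4 = 0 := by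
      rw [← E0 c, ← hYe]; exact hY.2 (b 0)
    have e1 : -3 * c 0 * c 1 + c 2 * c 3 + c 3 * c 4 = 0 := by
      rw [← E1 c, ← hYe]; exact hY.2 (b 1)
    have e2 : 4 * c 0 * c 2 - c 1 * c 3 = 0 := by
      rw [← E2 c, ← hYe]; exact hY.2 (b 2)
    have e3 : c 0 * c 3 - c 1 * c 4 = 0 := by
      rw [← E3 c, ← hYe]; exact hY.2 (b 3)
    have e4 : -2 * c 0 * c 4 = 0 := by
      rw [← E4 c, ← hYe]; exact hY.2 (b 4)
    show c 3 = 0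
    by_contra hc3
    have h04 : c 0 * c 4 = 0 := by linarith only [e4]
    rcases mul_eq_zero.mp h04 with h0 | h4
    · -- c 0 = 0
      have hc1 : c 1 = 0 := by
        have : c 1 * c 3 = 0 := by rw [h0] at e2; linarith only [e2]
        rcases mul_eq_zero.mp this with h | h
        · exact h
        · exact absurd h hc3
      have h24 : c 2 = -c 4 := by
        have h' : c 3 * (c 2 + c 4) = 0 := by rw [h0] at e1; ring_nf; ring_nf at e1; linarith only [e1]
        rcases mul_eq_zero.mp h' with h | h
        · exact absurd h hc3
        · linarith only [h]
      rw [hc1, h24] at e0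
      have h33 : c 3 * c 3 = 0 := by
        linarith only [e0, mul_self_nonneg (c 4), mul_self_nonneg (c 3)]
      exact hc3 (mul_self_eq_zero.mp h33)
    · -- c 4 = 0
      have h03 : c 0 * c 3 = 0 := by rw [h4] at e3; linarith only [e3]
      have h0 : c 0 = 0 := by
        rcases mul_eq_zero.mp h03 with h | h
        · exact h
        · exact absurd h hc3
      have hc1 : c 1 = 0 := by
        have : c 1 * c 3 = 0 := by rw [h0] at e2; linarith only [e2]
        rcases mul_eq_zero.mp this with h | h
        · exact h
        · exact absurd h hc3
      have hc2 : c 2 = 0 := by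
        have h' : c 2 * c 3 = 0 := by rw [h0, hc1, h4] at e1; linarith only [e1]
        rcases mul_eq_zero.mp h' with h | h
        · exact h
        · exact absurd h hc3
      rw [hc1, hc2, h4] at e0
      have h33 : c 3 * c 3 = 0 := by linarith only [e0]
      exact hc3 (mul_self_eq_zero.mp h33)
  -- span S ≤ kernel
  have span_le : ∀ v ∈ Submodule.span ℝ S, B v (b 3) = 0 := by
    intro v hv
    have : Submodule.span ℝ S ≤ LinearMap.ker (B.flip (b 3)) := by
      rw [Submodule.span_le]
      intro Y hY
      simp only [SetLike.mem_coe, LinearMap.mem_ker, LinearMap.flip_apply]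
      rw [keyB]
      exact geo_coord Y hY
    have := this hv
    simpa using this
  -- kernel ≤ span S
  have le_span : ∀ v : L, B v (b 3) = 0 → v ∈ Submodule.span ℝ S := by
    intro v hv
    rw [keyB] at hv
    have hve : v = b.repr v 0 • b 0 + b.repr v 1 • b 1 + b.repr v 2 • b 2 + b.repr v 4 • b 4 := by
      conv_lhs => rw [← b.sum_repr v]
      rw [Fin.sum_univ_five, hv]
      module
    rw [hve]
    exact Submodule.add_mem _ (Submodule.add_mem _ (Submodule.add_mem _
      (Submodule.smul_mem _ _ m0) (Submodule.smul_mem _ _ m1))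
      (Submodule.smul_mem _ _ m2)) (Submodule.smul_mem _ _ m4)
  constructor
  · ext v
    constructor
    · intro hv
      exact span_le v hv
    · intro hv
      exact le_span v hv
  · intro htop
    have hmem : b 3 ∈ Submodule.span ℝ S := by rw [htop]; trivial
    have := span_le (b 3) hmem
    rw [hB' 3 3] at this
    simp at this
end
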